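/- arXiv:2010.13279 — 6 statements merged into one kernel-verified Lean document; each statement's English description precedes it below -/
import Mathlib

section
/- For the single-well random walk on {−N,…,N} started at 0 with parameter θ ∈ (0,1), θ ≠ 1/2 (on {1,…,N−1} it steps +1 with probability θ and −1 with probability 1−θ; on {−N+1,…,0} it steps −1 with probability θ and +1 with probability 1−θ), the expected hitting time of {−N, N} equals (2θ(1−θ)/(1−2θ)²)·((1−θ)/θ)^N − (1/(1−2θ))·(N + 2θ(1−θ)/(1−2θ)). -/
/-- Single-well random walk on `{-N,…,N}` started at `0`, `θ ≠ 1/2`: explicit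
expected hitting time of `{-N, N}`, characterized via the hitting-time system. -/
theorem stmt6 (N : ℕ) (hN : 1 ≤ N) (θ : ℝ) (hθ0 : 0 < θ) (hθ1 : θ < 1)
    (hθhalf : θ ≠ 1 / 2) (e : ℤ → ℝ)
    (hbl : e (-(N : ℤ)) = 0) (hbr : e (N : ℤ) = 0)
    (hrec₁ : ∀ x : ℤ, 1 ≤ x → x < (N : ℤ) →
      e x = 1 + θ * e (x + 1) + (1 - θ) * e (x - 1))
    (hrec₂ : ∀ x : ℤ, -(N : ℤ) < x → x ≤ 0 →
      e x = 1 + (1 - θ) * e (x + 1) + θ * e (x - 1)) :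
    e 0 = (2 * θ * (1 - θ) / (1 - 2 * θ) ^ 2) * ((1 - θ) / θ) ^ N
        - (1 / (1 - 2 * θ)) * ((N : ℝ) + 2 * θ * (1 - θ) / (1 - 2 * θ)) := by
  have hθ : θ ≠ 0 := ne_of_gt hθ0
  have h12 : 1 - 2 * θ ≠ 0 := by
    intro h; apply hθhalf; linarith
  set ρ : ℝ := (1 - θ) / θ with hρ
  have hρpos : 0 < ρ := div_pos (by linarith) hθ0
  have hρ1 : ρ ≠ 1 := by
    rw [hρ]; intro h; apply hθhalf; field_simp at h; linarith
  have hρm1 : ρ - 1 ≠ 0 := sub_ne_zero.mpr hρ1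
  have hθρ : θ * ρ = 1 - θ := by rw [hρ]; field_simp
  set s : ℝ := ((ρ - 1) * θ)⁻¹ with hsdef
  have hs : s * ((ρ - 1) * θ) = 1 := inv_mul_cancel₀ (mul_ne_zero hρm1 hθ)
  -- positive side differences
  have hD : ∀ k : ℕ, k < N → e (k : ℤ) - e ((k : ℤ) + 1)
      = ρ ^ k * (e 0 - e 1) + (ρ ^ k - 1) * s := by
    intro k
    induction k with
    | zero => intro _; simp
    | succ k ih =>
      intro hk
      have ihk := ih (Nat.lt_of_succ_lt hk)
      have hrec := hrec₁ ((k : ℤ) + 1) (by omega) (by omega)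
      have h1 : (k : ℤ) + 1 - 1 = (k : ℤ) := by ring
      rw [h1] at hrec
      have expand : e ((k : ℤ) + 1) - e ((k : ℤ) + 1 + 1)
          = (1 + (1 - θ) * (e (k : ℤ) - e ((k : ℤ) + 1))) / θ := by
        rw [eq_div_iff hθ]
        linear_combination hrec
      push_cast
      rw [expand, ihk, div_eq_iff hθ]
      linear_combination (-(ρ ^ k * (e 0 - e 1) + (ρ ^ k - 1) * s)) * hθρ - hs
  -- negative side differences
  have hC : ∀ k : ℕ, k < N → e (-(k : ℤ)) - e (-((k : ℤ) + 1))
      = ρ ^ k * (e 0 - e (-1)) + (ρ ^ k - 1) * s := by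
    intro k
    induction k with
    | zero => intro _; simp
    | succ k ih =>
      intro hk
      have ihk := ih (Nat.lt_of_succ_lt hk)
      have hrec := hrec₂ (-((k : ℤ) + 1)) (by omega) (by omega)
      have h1 : -((k : ℤ) + 1) + 1 = -(k : ℤ) := by ring
      have h2 : -((k : ℤ) + 1) - 1 = -((k : ℤ) + 1 + 1) := by ring
      rw [h1, h2] at hrec
      have expand : e (-((k : ℤ) + 1)) - e (-((k : ℤ) + 1 + 1))
          = (1 + (1 - θ) * (e (-(k : ℤ)) - e (-((k : ℤ) + 1)))) / θ := by
        rw [eq_div_iff hθ]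
        linear_combination hrec
      push_cast
      rw [expand, ihk, div_eq_iff hθ]
      linear_combination (-(ρ ^ k * (e 0 - e (-1)) + (ρ ^ k - 1) * s)) * hθρ - hs
  -- telescoping sums
  have htelD : ∑ k ∈ Finset.range N, (e (k : ℤ) - e ((k : ℤ) + 1)) = e 0 := by
    have h := Finset.sum_range_sub' (f := fun k : ℕ => e (k : ℤ)) N
    have hcongr : ∑ k ∈ Finset.range N, (e (k : ℤ) - e ((k : ℤ) + 1))
        = ∑ k ∈ Finset.range N, (e (k : ℤ) - e ((k + 1 : ℕ) : ℤ)) := by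
      refine Finset.sum_congr rfl fun i _ => by push_cast; ring_nf
    rw [hcongr, h, hbr]
    simp
  have htelC : ∑ k ∈ Finset.range N, (e (-(k : ℤ)) - e (-((k : ℤ) + 1))) = e 0 := by
    have h := Finset.sum_range_sub' (f := fun k : ℕ => e (-(k : ℤ))) N
    have hcongr : ∑ k ∈ Finset.range N, (e (-(k : ℤ)) - e (-((k : ℤ) + 1)))
        = ∑ k ∈ Finset.range N, (e (-(k : ℤ)) - e (-((k + 1 : ℕ) : ℤ))) := by
      refine Finset.sum_congr rfl fun i _ => by push_cast; ring_nf
    rw [hcongr, h, hbl]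
    simp
  set G : ℝ := ∑ k ∈ Finset.range N, ρ ^ k with hG
  have hGpos : 0 < G := by
    apply Finset.sum_pos (fun i _ => pow_pos hρpos i)
    exact Finset.nonempty_range_iff.mpr (by omega)
  have hsplit : ∀ c : ℝ, ∑ k ∈ Finset.range N,
      (ρ ^ k * c + (ρ ^ k - 1) * s)
      = G * c + (G - N) * s := by
    intro c
    rw [Finset.sum_add_distrib, ← Finset.sum_mul, ← Finset.sum_mul,
      Finset.sum_sub_distrib]
    simp [hG]
  have hsumD : e 0 = G * (e 0 - e 1) + (G - N) * s := by
    conv_lhs => rw [← htelD]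
    rw [Finset.sum_congr rfl fun k hk => hD k (Finset.mem_range.mp hk), hsplit]
  have hsumC : e 0 = G * (e 0 - e (-1)) + (G - N) * s := by
    conv_lhs => rw [← htelC]
    rw [Finset.sum_congr rfl fun k hk => hC k (Finset.mem_range.mp hk), hsplit]
  have heq : e 0 - e 1 = e 0 - e (-1) := by
    have h := hsumD.symm.trans hsumC
    have h2 := add_right_cancel h
    exact mul_left_cancel₀ hGpos.ne' h2
  -- coupling at 0
  have hc0 := hrec₂ 0 (by omega) (by omega)
  norm_num at hc0
  have hd1 : e 0 - e 1 = 1 := by linear_combination hc0 + θ * heq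
  -- geometric sum and final algebra
  have hGeq : G = (ρ ^ N - 1) / (ρ - 1) := by rw [hG]; exact geom_sum_eq hρ1 N
  have hρm1' : ρ - 1 = (1 - 2 * θ) / θ := by
    rw [hρ, div_sub_one hθ]; ring_nf
  set P : ℝ := ((1 - θ) / θ) ^ N with hP
  have hρP : ρ ^ N = P := by rw [hρ]
  rw [hd1] at hsumD
  rw [hsumD, hGeq, hsdef, hρm1']
  field_simp
  ring
end

section
/- With m_N and h_N as for the single-well random walk (h_N(θ) = N^{−1} log m_N(θ), h(θ) = max(log((1−θ)/θ), 0)), for any a ∈ (0,1), sup_{θ ∈ [a,1)} |h_N(θ) − h(θ)| → 0 as N → ∞. -/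
open Filter Topology

/-- Expected hitting time of the single-well walk (including `θ = 1/2`). -/
noncomputable def mSW (N : ℕ) (θ : ℝ) : ℝ :=
  if θ = 1 / 2 then (N : ℝ) ^ 2 else
    (2 * θ * (1 - θ) / (1 - 2 * θ) ^ 2) * ((1 - θ) / θ) ^ N
      - (1 / (1 - 2 * θ)) * ((N : ℝ) + 2 * θ * (1 - θ) / (1 - 2 * θ))

open Finset in
noncomputable def PSW (N : ℕ) (r : ℝ) : ℝ :=
  ∑ j ∈ Finset.range N, (1 + 2 * r * ∑ i ∈ Finset.range j, r ^ i)

lemma PSW_one (N : ℕ) : PSW N 1 = (N : ℝ) ^ 2 := by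
  induction N with
  | zero => simp [PSW]
  | succ n ih =>
    rw [PSW, Finset.sum_range_succ, ← PSW, ih]
    simp
    push_cast
    ring

lemma PSW_ne (r : ℝ) (hr : r ≠ 1) (N : ℕ) :
    PSW N r = N + 2 * r / (r - 1) * ((r ^ N - 1) / (r - 1) - N) := by
  have h1 : r - 1 ≠ 0 := sub_ne_zero.mpr hr
  induction N with
  | zero => simp [PSW]
  | succ n ih =>
    rw [PSW, Finset.sum_range_succ, ← PSW, ih, geom_sum_eq hr]
    push_cast
    field_simp
    ring

lemma mSW_eq (N : ℕ) (θ : ℝ) (hθ0 : 0 < θ) (hθ1 : θ < 1) :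
    mSW N θ = PSW N ((1 - θ) / θ) := by
  by_cases h : θ = 1 / 2
  · subst h
    norm_num [mSW, PSW_one]
  · have hθ0' : θ ≠ 0 := ne_of_gt hθ0
    have hs : 1 - 2 * θ ≠ 0 := by
      intro hc
      apply h
      linarith [hc]
    have hr : (1 - θ) / θ ≠ 1 := by
      intro hc
      rw [div_eq_one_iff_eq hθ0'] at hc
      apply h; linarith
    rw [PSW_ne _ hr, mSW, if_neg h]
    have h1 : (1 - θ) / θ - 1 = (1 - 2 * θ) / θ := by field_simp; ring
    rw [div_pow, h1]
    field_simp
    ring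

lemma PSW_nonneg_term (r : ℝ) (hr : 0 < r) (j : ℕ) :
    (0:ℝ) ≤ 1 + 2 * r * ∑ i ∈ Finset.range j, r ^ i := by
  have : (0:ℝ) ≤ ∑ i ∈ Finset.range j, r ^ i :=
    Finset.sum_nonneg fun i _ => by positivity
  nlinarith

lemma le_PSW_N (N : ℕ) (r : ℝ) (hr : 0 < r) : (N : ℝ) ≤ PSW N r := by
  calc (N : ℝ) = ∑ _j ∈ Finset.range N, (1:ℝ) := by simp
  _ ≤ PSW N r := by
    apply Finset.sum_le_sum
    intro j _
    have : (0:ℝ) ≤ ∑ i ∈ Finset.range j, r ^ i :=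
      Finset.sum_nonneg fun i _ => by positivity
    nlinarith

lemma le_PSW_pow (N : ℕ) (hN : 1 ≤ N) (r : ℝ) (hr : 0 < r) :
    r ^ (N - 1) ≤ PSW N r := by
  have hmem : N - 1 ∈ Finset.range N := by
    rw [Finset.mem_range]; omega
  have h1 : r ^ (N - 1) ≤ 1 + 2 * r * ∑ i ∈ Finset.range (N - 1), r ^ i := by
    rcases Nat.eq_zero_or_pos (N - 1) with h | h
    · rw [h]; simp
    · obtain ⟨k, hk⟩ := Nat.exists_eq_succ_of_ne_zero (Nat.pos_iff_ne_zero.mp h)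
      have hsingle : r ^ k ≤ ∑ i ∈ Finset.range (N - 1), r ^ i := by
        apply Finset.single_le_sum (f := fun i => r ^ i)
          (fun i _ => by positivity)
        rw [Finset.mem_range, hk]; omega
      have : r ^ (N - 1) = r * r ^ k := by rw [hk, pow_succ]; ring
      nlinarith [pow_pos hr k]
  calc r ^ (N - 1) ≤ 1 + 2 * r * ∑ i ∈ Finset.range (N - 1), r ^ i := h1
  _ ≤ PSW N r :=
    Finset.single_le_sum (f := fun j => 1 + 2 * r * ∑ i ∈ Finset.range j, r ^ i)
      (fun j _ => PSW_nonneg_term r hr j) hmem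

lemma sum_odd_sq (N : ℕ) : ∑ j ∈ Finset.range N, (1 + 2 * 1 * (j:ℝ)) = (N:ℝ)^2 := by
  induction N with
  | zero => simp
  | succ n ih => rw [Finset.sum_range_succ, ih]; push_cast; ring

lemma PSW_le (N : ℕ) (r : ℝ) (hr : 0 < r) :
    PSW N r ≤ (N : ℝ) ^ 2 * (max 1 r) ^ N := by
  have hM1 : (1:ℝ) ≤ max 1 r := le_max_left _ _
  have hMpos : (0:ℝ) < max 1 r := lt_of_lt_of_le one_pos hM1
  have key : ∀ j ∈ Finset.range N,
      1 + 2 * r * ∑ i ∈ Finset.range j, r ^ i ≤ (1 + 2 * 1 * (j:ℝ)) * (max 1 r) ^ N := by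
    intro j hj
    rw [Finset.mem_range] at hj
    have hterm : ∀ i ∈ Finset.range j, r * r ^ i ≤ (max 1 r) ^ N := by
      intro i hi
      rw [Finset.mem_range] at hi
      calc r * r ^ i = r ^ (i + 1) := (pow_succ' r i).symm
      _ ≤ (max 1 r) ^ (i + 1) := pow_le_pow_left₀ hr.le (le_max_right _ _) _
      _ ≤ (max 1 r) ^ N := pow_le_pow_right₀ hM1 (by omega)
    have hsum : r * ∑ i ∈ Finset.range j, r ^ i ≤ (j:ℝ) * (max 1 r) ^ N := by
      rw [Finset.mul_sum]
      calc (∑ i ∈ Finset.range j, r * r ^ i) ≤ ∑ i ∈ Finset.range j, (max 1 r) ^ N :=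
        Finset.sum_le_sum hterm
      _ = (j:ℝ) * (max 1 r) ^ N := by rw [Finset.sum_const, Finset.card_range]; ring
    have hone : (1:ℝ) ≤ (max 1 r) ^ N := one_le_pow₀ hM1
    nlinarith
  calc PSW N r ≤ ∑ j ∈ Finset.range N, (1 + 2 * 1 * (j:ℝ)) * (max 1 r) ^ N :=
    Finset.sum_le_sum key
  _ = (N:ℝ)^2 * (max 1 r) ^ N := by rw [← Finset.sum_mul, sum_odd_sq]

lemma key_bound (a : ℝ) (ha0 : 0 < a) (_ha1 : a < 1) (N : ℕ) (hN : 1 ≤ N)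
    (θ : ℝ) (hθ : θ ∈ Set.Ico a 1) :
    |(N : ℝ)⁻¹ * Real.log (mSW N θ) - max (Real.log ((1 - θ) / θ)) 0|
      ≤ (Real.log (max 1 ((1 - a) / a)) + 2 * Real.log N) / N := by
  have hθ0 : 0 < θ := lt_of_lt_of_le ha0 hθ.1
  have hθ1 : θ < 1 := hθ.2
  have haθ : a ≤ θ := hθ.1
  set r : ℝ := (1 - θ) / θ with hrdef
  have hr : 0 < r := div_pos (by linarith) hθ0
  set R : ℝ := max 1 ((1 - a) / a) with hRdef
  have hR1 : (1:ℝ) ≤ R := le_max_left _ _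
  have hRpos : (0:ℝ) < R := lt_of_lt_of_le one_pos hR1
  have hlogR : 0 ≤ Real.log R := Real.log_nonneg hR1
  have hrR : r ≤ R := by
    have : r ≤ (1 - a) / a := by
      apply div_le_div₀ (by linarith) (by linarith) ha0 hθ.1
    exact this.trans (le_max_right _ _)
  have hNpos : (0:ℝ) < N := by exact_mod_cast hN
  have hlogN : 0 ≤ Real.log N := Real.log_nonneg (by exact_mod_cast hN)
  have hm : mSW N θ = PSW N r := mSW_eq N θ hθ0 hθ1
  have hmpos : 0 < PSW N r := lt_of_lt_of_le hNpos (le_PSW_N N r hr)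
  have hM1 : (1:ℝ) ≤ max 1 r := le_max_left _ _
  have hMpos : (0:ℝ) < max 1 r := lt_of_lt_of_le one_pos hM1
  have hmax : max (Real.log r) 0 = Real.log (max 1 r) := by
    rcases le_total r 1 with h | h
    · rw [max_eq_left h, Real.log_one, max_eq_right (Real.log_nonpos hr.le h)]
    · rw [max_eq_right h, max_eq_left (Real.log_nonneg h)]
  -- upper bound on log
  have hup : Real.log (PSW N r) ≤ (N:ℝ) * Real.log (max 1 r) + 2 * Real.log N := by
    calc Real.log (PSW N r) ≤ Real.log ((N:ℝ)^2 * (max 1 r)^N) :=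
      Real.log_le_log hmpos (PSW_le N r hr)
    _ = (N:ℝ) * Real.log (max 1 r) + 2 * Real.log N := by
      rw [Real.log_mul (by positivity) (by positivity), Real.log_pow, Real.log_pow]
      push_cast; ring
  -- lower bound on log
  have hlow : (N:ℝ) * Real.log (max 1 r) - Real.log R ≤ Real.log (PSW N r) := by
    rcases le_total r 1 with h | h
    · rw [max_eq_left h, Real.log_one]
      have h1 : (0:ℝ) ≤ Real.log (PSW N r) :=
        Real.log_nonneg (le_trans (by exact_mod_cast hN) (le_PSW_N N r hr))
      linarith
    · rw [max_eq_right h]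
      have hpow : r ^ N / R ≤ PSW N r := by
        have h1 : r ^ N ≤ r ^ (N - 1) * R := by
          have : r ^ (N - 1) * r = r ^ N := by
            rw [← pow_succ]; congr 1; omega
          nlinarith [pow_pos hr (N - 1)]
        have h2 : r ^ N / R ≤ r ^ (N - 1) := by
          rw [div_le_iff₀ hRpos]; exact h1
        exact h2.trans (le_PSW_pow N hN r hr)
      have hstep : (N:ℝ) * Real.log r - Real.log R = Real.log (r ^ N / R) := by
        rw [Real.log_div (by positivity) (ne_of_gt hRpos), Real.log_pow]
      rw [hstep]
      exact Real.log_le_log (div_pos (pow_pos hr N) hRpos) hpow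
  -- combine
  have habs : |Real.log (PSW N r) - (N:ℝ) * Real.log (max 1 r)|
      ≤ Real.log R + 2 * Real.log N := by
    rw [abs_le]; constructor <;> linarith
  have heq : (N : ℝ)⁻¹ * Real.log (mSW N θ) - max (Real.log r) 0
      = (N:ℝ)⁻¹ * (Real.log (PSW N r) - (N:ℝ) * Real.log (max 1 r)) := by
    rw [hm, hmax]; field_simp
  rw [heq, abs_mul, abs_inv, abs_of_pos hNpos, div_eq_inv_mul]
  exact mul_le_mul_of_nonneg_left habs (by positivity)


/-- Uniform convergence on `[a, 1)` of `h_N(θ) = N⁻¹ log m_N(θ)` to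
`h(θ) = max (log((1-θ)/θ)) 0` for the single-well walk. -/
theorem stmt8 (a : ℝ) (ha0 : 0 < a) (ha1 : a < 1) :
    Tendsto (fun N : ℕ =>
        ⨆ θ : Set.Ico a (1 : ℝ),
          |(N : ℝ)⁻¹ * Real.log (mSW N θ) - max (Real.log ((1 - (θ : ℝ)) / θ)) 0|)
      atTop (𝓝 0) := by
  have hne : Nonempty ↥(Set.Ico a (1:ℝ)) := ⟨⟨a, le_refl a, ha1⟩⟩
  set R : ℝ := max 1 ((1 - a) / a) with hRdef
  set g : ℕ → ℝ := fun N => (Real.log R + 2 * Real.log N) / N with hgdef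
  apply squeeze_zero' (g := g)
  · filter_upwards [eventually_ge_atTop 1] with N hN
    have hbdd : BddAbove (Set.range fun θ : Set.Ico a (1:ℝ) =>
        |(N : ℝ)⁻¹ * Real.log (mSW N θ) - max (Real.log ((1 - (θ : ℝ)) / θ)) 0|) := by
      refine ⟨g N, ?_⟩
      rintro x ⟨θ, rfl⟩
      exact key_bound a ha0 ha1 N hN θ θ.2
    exact le_ciSup_of_le hbdd (Classical.arbitrary _) (abs_nonneg _)
  · filter_upwards [eventually_ge_atTop 1] with N hN
    exact ciSup_le fun θ => key_bound a ha0 ha1 N hN θ θ.2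
  · have t1 : Tendsto (fun N : ℕ => Real.log R / N) atTop (𝓝 0) :=
      tendsto_const_div_atTop_nhds_zero_nat _
    have t2 : Tendsto (fun N : ℕ => Real.log N / N) atTop (𝓝 0) := by
      have h := Real.isLittleO_log_id_atTop.tendsto_div_nhds_zero
      exact h.comp tendsto_natCast_atTop_atTop
    have := t1.add (t2.const_mul 2)
    simp only [add_zero, mul_zero] at this
    convert this using 2 with N
    rw [hgdef]
    ring
end

section
/- For the alternating-wells random walk on {−2N,…,2N} started at 0 with parameter θ ∈ (0,1), θ ≠ 1/2, the expected hitting time of {−2N, 2N} equals [2θ(1−θ)/(1−2θ)²] / [θ(θ/(1−θ))^N + 1−θ] · (1 − (θ/(1−θ))^N) · ((((1−θ)/θ)^N − (θ/(1−θ))^N)). -/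
set_option maxHeartbeats 4000000 in
/-- Alternating-wells random walk on `{-2N,…,2N}` started at `0`, `θ ≠ 1/2`:
explicit expected hitting time of `{-2N, 2N}`, characterized via the
hitting-time system. -/
theorem stmt11 (N : ℕ) (hN : 1 ≤ N) (θ : ℝ) (hθ0 : 0 < θ) (hθ1 : θ < 1)
    (hθhalf : θ ≠ 1 / 2) (e : ℤ → ℝ)
    (hbl : e (-(2 * N : ℤ)) = 0) (hbr : e ((2 * N : ℤ)) = 0)
    (hrec₁ : ∀ x : ℤ, (-(2 * N : ℤ) < x ∧ x < -(N : ℤ)) ∨ ((N : ℤ) < x ∧ x < (2 * N : ℤ)) →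
      e x = 1 + θ * e (x + 1) + (1 - θ) * e (x - 1))
    (hrec₂ : ∀ x : ℤ, -(N : ℤ) ≤ x → x ≤ (N : ℤ) →
      e x = 1 + (1 - θ) * e (x + 1) + θ * e (x - 1)) :
    e 0 = (2 * θ * (1 - θ) / (1 - 2 * θ) ^ 2) / (θ * (θ / (1 - θ)) ^ N + (1 - θ))
        * (1 - (θ / (1 - θ)) ^ N) * (((1 - θ) / θ) ^ N - (θ / (1 - θ)) ^ N) := by
  have hθne : θ ≠ 0 := ne_of_gt hθ0
  have h1θ : (0:ℝ) < 1 - θ := by linarith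
  have h1θne : (1:ℝ) - θ ≠ 0 := ne_of_gt h1θ
  have h2θ : (1:ℝ) - 2*θ ≠ 0 := fun h => hθhalf (by linarith)
  set r : ℝ := θ / (1 - θ) with hr_def
  set s : ℝ := (1 - θ) / θ with hs_def
  set c : ℝ := 1 / (1 - 2*θ) with hc_def
  have hr0 : 0 < r := div_pos hθ0 h1θ
  have hs0 : 0 < s := div_pos h1θ hθ0
  have hsr : s * r = 1 := by rw [hs_def, hr_def]; field_simp
  have hθs : θ * s = 1 - θ := by rw [hs_def]; field_simp
  have hθr : (1 - θ) * r = θ := by rw [hr_def]; field_simp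
  have hc1 : c * (1 - 2*θ) = 1 := by rw [hc_def]; field_simp
  have hs1 : s ≠ 1 := fun h => hθhalf (by rw [h, mul_one] at hθs; linarith)
  have hr1 : r ≠ 1 := fun h => hθhalf (by rw [h, mul_one] at hθr; linarith)
  -- the increments
  set u : ℕ → ℝ := fun n => e ((n:ℤ) + 1 - 2*N) - e ((n:ℤ) - 2*N) with hu_def
  -- outer recurrence
  have hout : ∀ n : ℕ, (n + 1 < N ∨ (3*N < n + 1 ∧ n + 1 < 4*N)) →
      θ * u (n+1) = (1 - θ) * u n - 1 := by
    intro n hn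
    have hx := hrec₁ ((n:ℤ) + 1 - 2*N) (by
      rcases hn with h | ⟨h1, h2⟩
      · left; constructor <;> omega
      · right; constructor <;> omega)
    simp only [hu_def]
    push_cast
    ring_nf
    ring_nf at hx
    linarith [hx]
  have hin : ∀ n : ℕ, N ≤ n + 1 → n + 1 ≤ 3*N →
      (1 - θ) * u (n+1) = θ * u n - 1 := by
    intro n h1 h2
    have hx := hrec₂ ((n:ℤ) + 1 - 2*N) (by omega) (by omega)
    simp only [hu_def]
    push_cast
    ring_nf
    ring_nf at hx
    linarith [hx]
  set t : ℝ := u 0 - c with ht_def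
  -- region 1 closed form
  have G1 : ∀ n, n < N → u n = c + t * s^n := by
    intro n
    induction n with
    | zero => intro _; simp [ht_def]
    | succ n ih =>
      intro h
      have hu1 := hout n (Or.inl h)
      have hun := ih (by omega)
      apply mul_left_cancel₀ hθne
      rw [hu1, hun]
      linear_combination hc1 - (t * s^n) * hθs
  -- region 2 closed form
  have G2 : ∀ k, k ≤ 2*N → u (N + k) = -c + (u N + c) * r^k := by
    intro k
    induction k with
    | zero => intro _; simp
    | succ k ih =>
      intro h
      have hu1 := hin (N + k) (by omega) (by omega)
      have huk := ih (by omega)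
      apply mul_left_cancel₀ h1θne
      have : N + (k+1) = (N + k) + 1 := by omega
      rw [this, hu1, huk]
      linear_combination hc1 - ((u N + c) * r^k) * hθr
  -- region 3 closed form
  have G3 : ∀ k, k < N → u (3*N + k) = c + (u (3*N) - c) * s^k := by
    intro k
    induction k with
    | zero => intro _; simp
    | succ k ih =>
      intro h
      have hu1 := hout (3*N + k) (Or.inr ⟨by omega, by omega⟩)
      have huk := ih (by omega)
      apply mul_left_cancel₀ hθne
      have : 3*N + (k+1) = (3*N + k) + 1 := by omega
      rw [this, hu1, huk]
      linear_combination hc1 - ((u (3*N) - c) * s^k) * hθs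
  -- link at N
  have hA : (1 - θ) * (u N + c) = 2*θ*c + θ * t * s^(N-1) := by
    have h1 := hin (N-1) (by omega) (by omega)
    rw [Nat.sub_add_cancel hN] at h1
    have h2 := G1 (N-1) (by omega)
    rw [h2] at h1
    linear_combination h1 + hc1
  -- link at 3N
  have hB : u (3*N) - c = (u N + c) * r^(2*N) - 2*c := by
    have h1 := G2 (2*N) le_rfl
    rw [show N + 2*N = 3*N by ring] at h1
    linarith [h1]
  -- telescoping sums
  have hfs : ∀ m : ℕ, e ((m:ℤ) - 2*N) = ∑ n ∈ Finset.range m, u n := by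
    intro m
    induction m with
    | zero => simpa using hbl
    | succ m ih =>
      rw [Finset.sum_range_succ, ← ih]
      simp only [hu_def]
      push_cast
      ring_nf
  set Ss : ℝ := ∑ n ∈ Finset.range N, s^n with hSs_def
  set Sr : ℝ := ∑ n ∈ Finset.range N, r^n with hSr_def
  set Sr2 : ℝ := ∑ n ∈ Finset.range (2*N), r^n with hSr2_def
  set A : ℝ := u N + c with hA_def
  -- sum over region 1
  have S1 : ∑ n ∈ Finset.range N, u n = N * c + t * Ss := by
    rw [Finset.sum_congr rfl (fun n hn => G1 n (Finset.mem_range.mp hn)),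
      Finset.sum_add_distrib, Finset.sum_const, Finset.card_range, nsmul_eq_mul, ← Finset.mul_sum]
  have S2 : ∑ k ∈ Finset.range (2*N), u (N + k) = -(2*N) * c + A * Sr2 := by
    rw [Finset.sum_congr rfl (fun k hk => G2 k (by have := Finset.mem_range.mp hk; omega)),
      Finset.sum_add_distrib, Finset.sum_const, Finset.card_range, nsmul_eq_mul, ← Finset.mul_sum]
    push_cast
    ring
  have S2' : ∑ k ∈ Finset.range N, u (N + k) = -(N) * c + A * Sr := by
    rw [Finset.sum_congr rfl (fun k hk => G2 k (by have := Finset.mem_range.mp hk; omega)),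
      Finset.sum_add_distrib, Finset.sum_const, Finset.card_range, nsmul_eq_mul, ← Finset.mul_sum]
    push_cast
    ring
  have S3 : ∑ k ∈ Finset.range N, u (3*N + k) = N * c + (u (3*N) - c) * Ss := by
    rw [Finset.sum_congr rfl (fun k hk => G3 k (Finset.mem_range.mp hk)),
      Finset.sum_add_distrib, Finset.sum_const, Finset.card_range, nsmul_eq_mul, ← Finset.mul_sum]
  -- total sum is zero
  have Heq : t * Ss + A * Sr2 + (u (3*N) - c) * Ss = 0 := by
    have h40 : e ((4*N:ℕ) - 2*(N:ℤ)) = 0 := by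
      rw [show ((4*N:ℕ):ℤ) - 2*(N:ℤ) = (2*N:ℤ) by push_cast; ring]; exact hbr
    have h4 := hfs (4*N)
    rw [h40] at h4
    rw [show 4*N = N + (2*N + N) by ring, Finset.sum_range_add, Finset.sum_range_add] at h4
    rw [S1, S2] at h4
    rw [Finset.sum_congr rfl (fun k (hk : k ∈ Finset.range N) =>
      show u (N + (2*N + k)) = u (3*N + k) by rw [show N + (2*N + k) = 3*N + k by ring])] at h4
    rw [S3] at h4
    push_cast at h4
    linarith [h4]
  -- value at 0
  have he0 : e 0 = t * Ss + A * Sr := by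
    have h20 : e 0 = e ((2*N:ℕ) - 2*(N:ℤ)) := by
      rw [show ((2*N:ℕ):ℤ) - 2*(N:ℤ) = 0 by push_cast; ring]
    rw [h20, hfs (2*N), show 2*N = N + N by ring, Finset.sum_range_add, S1, S2']
    push_cast
    ring
  -- solve the linear system
  set D : ℝ := (1-θ) * Ss + θ * s^(N-1) * Sr2 + θ * s^(N-1) * r^(2*N) * Ss with hD_def
  have hSs0 : 0 < Ss :=
    Finset.sum_pos (fun i _ => pow_pos hs0 i) (Finset.nonempty_range_iff.mpr (by omega))
  have hSr20 : 0 < Sr2 :=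
    Finset.sum_pos (fun i _ => pow_pos hr0 i) (Finset.nonempty_range_iff.mpr (by omega))
  have hD0 : 0 < D := by
    rw [hD_def]
    have := pow_pos hs0 (N-1)
    have := pow_pos hr0 (2*N)
    have ha := mul_pos h1θ hSs0
    have hb := mul_pos (mul_pos hθ0 (pow_pos hs0 (N-1))) hSr20
    have hc := mul_pos (mul_pos (mul_pos hθ0 (pow_pos hs0 (N-1))) (pow_pos hr0 (2*N))) hSs0
    linarith
  have hAD : A * D = 2*θ*c*Ss + 2*θ*c*s^(N-1)*Ss := by
    rw [hD_def]
    linear_combination Ss * hA + θ * s^(N-1) * Heq - θ * s^(N-1) * Ss * hB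
  have he0' : e 0 = A * (Sr - Sr2 - r^(2*N) * Ss) + 2*c*Ss := by
    linear_combination he0 + Heq - Ss * hB
  set P : ℝ := r^N with hP_def
  have hgs : Ss = (s^N - 1) / (s - 1) := geom_sum_eq hs1 N
  have hgr : Sr = (P - 1) / (r - 1) := geom_sum_eq hr1 N
  have hgr2 : Sr2 = (r^(2*N) - 1) / (r - 1) := geom_sum_eq hr1 (2*N)
  have hP0 : 0 < P := pow_pos hr0 N
  have hPne : P ≠ 0 := ne_of_gt hP0
  have hdenne : θ * P + (1 - θ) ≠ 0 := by positivity
  have hsN1 : s^(N-1) = s^N * r := by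
    calc s^(N-1) = s^(N-1) * (s * r) := by rw [hsr, mul_one]
    _ = (s^(N-1) * s) * r := by ring
    _ = s^N * r := by rw [← pow_succ, Nat.sub_add_cancel hN]
  have hr2N : r^(2*N) = P * P := by rw [hP_def, two_mul, pow_add]
  have hQP : s^N * P = 1 := by rw [hP_def, ← mul_pow, hsr, one_pow]
  have hQ : s^N = 1 / P := eq_one_div_of_mul_eq_one_left hQP
  clear_value P
  have h2θc : 2*θ - 1 ≠ 0 := fun h => h2θ (by linarith)
  have es1 : s - 1 = (1-2*θ)/θ := by rw [hs_def]; field_simp; ring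
  have er1 : r - 1 = (2*θ-1)/(1-θ) := by rw [hr_def]; field_simp; ring
  have cSs : Ss = θ*(1-P)/(P*(1-2*θ)) := by
    rw [hgs, hQ, es1]; field_simp [h2θ]
  have cSr : Sr = (1-θ)*(1-P)/(1-2*θ) := by
    rw [hgr, er1]; field_simp [h2θc]; ring
  have cSr2 : Sr2 = (1-θ)*(1-P*P)/(1-2*θ) := by
    rw [hgr2, er1, hr2N]; field_simp [h2θc]; ring
  have csN1 : s^(N-1) = θ/((1-θ)*P) := by
    rw [hsN1, hQ, hr_def]; field_simp
  have cD : D = θ*(1-P)*(θ*P+(1-θ))/(P*(1-2*θ)*(1-θ)) := by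
    rw [hD_def, cSs, cSr2, csN1, hr2N]; field_simp; ring
  have hAc : A = 2*θ*((1-θ)*P+θ) / (P*(1-2*θ)*(θ*P+(1-θ))) := by
    apply mul_right_cancel₀ (ne_of_gt hD0)
    rw [hAD, cSs, csN1, cD, hc_def]
    field_simp
  rw [he0', hAc, cSs, cSr, cSr2, hr2N, hQ, hc_def]
  field_simp
  ring
end

section
/- Let (Ξ,d) be a compact metric space, μ a probability measure, and m_N : Ξ → (0,∞) integrable. Suppose there exists θ* ∈ supp(μ) such that for every open neighborhood V of θ*, (∫_{V^c} m_N dμ)/(∫_V m_N dμ) → 0 as N → ∞. Then for every continuous f : Ξ → ℝ, (∫ f·m_N dμ)/(∫ m_N dμ) → f(θ*). -/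
open MeasureTheory Filter Topology

/-- Key Lemma (K = 1 case): if the mass of `m_N dμ` outside any neighborhood of
`θ* ∈ supp μ` is asymptotically negligible compared to the mass inside, then the
renormalized measures concentrate at `θ*`. -/
theorem stmt13
    {Ξ : Type*} [MetricSpace Ξ] [CompactSpace Ξ] [MeasurableSpace Ξ] [BorelSpace Ξ]
    (μ : Measure Ξ) [IsProbabilityMeasure μ]
    (m : ℕ → Ξ → ℝ) (hpos : ∀ N θ, 0 < m N θ)
    (hint : ∀ N, Integrable (m N) μ)
    (θstar : Ξ)
    (hsupp : ∀ V : Set Ξ, IsOpen V → θstar ∈ V → 0 < μ V)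
    (hconc : ∀ V : Set Ξ, IsOpen V → θstar ∈ V →
      Tendsto (fun N => (∫ θ in Vᶜ, m N θ ∂μ) / (∫ θ in V, m N θ ∂μ)) atTop (𝓝 0))
    (f : Ξ → ℝ) (hf : Continuous f) :
    Tendsto (fun N => (∫ θ, f θ * m N θ ∂μ) / (∫ θ, m N θ ∂μ)) atTop
      (𝓝 (f θstar)) := by
  -- global bound on |f - f θstar|
  have hcont : Continuous fun θ => |f θ - f θstar| :=
    (hf.sub continuous_const).abs
  haveI : Nonempty Ξ := ⟨θstar⟩
  obtain ⟨θmax, -, hMmax⟩ := isCompact_univ.exists_isMaxOn (Set.univ_nonempty) hcont.continuousOn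
  set M : ℝ := |f θmax - f θstar| with hMdef
  have hM0 : 0 ≤ M := abs_nonneg _
  have hMb : ∀ θ, |f θ - f θstar| ≤ M := fun θ => hMmax (Set.mem_univ θ)
  rw [Metric.tendsto_atTop]
  intro ε hε
  set V : Set Ξ := {θ | |f θ - f θstar| < ε / 2} with hVdef
  have hVopen : IsOpen V := isOpen_lt hcont continuous_const
  have hθV : θstar ∈ V := by
    simp [hVdef]
    positivity
  have hVmeas : MeasurableSet V := hVopen.measurableSet
  have hr := hconc V hVopen hθV
  rw [Metric.tendsto_atTop] at hr
  obtain ⟨N₀, hN₀⟩ := hr (ε / (2 * (M + 1))) (by positivity)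
  refine ⟨N₀, fun n hn => ?_⟩
  have hμV := hsupp V hVopen hθV
  have hInt := hint n
  have hIntV : IntegrableOn (m n) V μ := hInt.integrableOn
  have hIntVc : IntegrableOn (m n) Vᶜ μ := hInt.integrableOn
  have hmn0 : ∀ θ, 0 ≤ m n θ := fun θ => (hpos n θ).le
  have hA : 0 < ∫ θ in V, m n θ ∂μ := by
    rw [setIntegral_pos_iff_support_of_nonneg_ae
      (Filter.Eventually.of_forall hmn0) hIntV]
    have hsup : Function.support (m n) = Set.univ :=
      Set.eq_univ_of_forall fun θ => (hpos n θ).ne'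
    simpa [hsup] using hμV
  have hB : 0 ≤ ∫ θ in Vᶜ, m n θ ∂μ :=
    setIntegral_nonneg hVmeas.compl fun θ _ => hmn0 θ
  have hsplit : ∫ θ, m n θ ∂μ = (∫ θ in V, m n θ ∂μ) + ∫ θ in Vᶜ, m n θ ∂μ :=
    (integral_add_compl hVmeas hInt).symm
  have hI : 0 < ∫ θ, m n θ ∂μ := by rw [hsplit]; linarith
  -- integrability of f * m and (f - c) * m
  have hfbdd : ∃ C, ∀ θ, ‖f θ‖ ≤ C := by
    refine ⟨M + |f θstar|, fun θ => ?_⟩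
    have := hMb θ
    have h1 : |f θ| - |f θstar| ≤ |f θ - f θstar| := abs_sub_abs_le_abs_sub _ _
    simp only [Real.norm_eq_abs]
    linarith
  have hIntfm : Integrable (fun θ => f θ * m n θ) μ :=
    hInt.bdd_mul hf.aestronglyMeasurable (Filter.Eventually.of_forall hfbdd.choose_spec)
  have hIntgm : Integrable (fun θ => (f θ - f θstar) * m n θ) μ := by
    have : (fun θ => (f θ - f θstar) * m n θ)
        = fun θ => f θ * m n θ - f θstar * m n θ := by
      funext θ; ring
    rw [this]
    exact hIntfm.sub (hInt.const_mul _)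
  have hIntam : Integrable (fun θ => |f θ - f θstar| * m n θ) μ := by
    have : (fun θ => |f θ - f θstar| * m n θ)
        = fun θ => |(f θ - f θstar) * m n θ| := by
      funext θ
      rw [abs_mul, abs_of_nonneg (hmn0 θ)]
    rw [this]
    exact hIntgm.abs
  -- numerator estimate
  have hnum : |∫ θ, f θ * m n θ ∂μ - f θstar * ∫ θ, m n θ ∂μ|
      ≤ (ε / 2) * (∫ θ in V, m n θ ∂μ) + M * ∫ θ in Vᶜ, m n θ ∂μ := by
    have heq : ∫ θ, f θ * m n θ ∂μ - f θstar * ∫ θ, m n θ ∂μ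
        = ∫ θ, (f θ - f θstar) * m n θ ∂μ := by
      rw [← integral_const_mul]
      rw [← integral_sub hIntfm (hInt.const_mul _)]
      congr 1; funext θ; ring
    rw [heq]
    calc |∫ θ, (f θ - f θstar) * m n θ ∂μ|
        ≤ ∫ θ, |(f θ - f θstar) * m n θ| ∂μ := by
          simpa only [Real.norm_eq_abs] using
            norm_integral_le_integral_norm (μ := μ) (fun θ => (f θ - f θstar) * m n θ)
      _ = ∫ θ, |f θ - f θstar| * m n θ ∂μ := by
          congr 1; funext θ; rw [abs_mul, abs_of_nonneg (hmn0 θ)]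
      _ = (∫ θ in V, |f θ - f θstar| * m n θ ∂μ)
            + ∫ θ in Vᶜ, |f θ - f θstar| * m n θ ∂μ :=
          (integral_add_compl hVmeas hIntam).symm
      _ ≤ (ε / 2) * (∫ θ in V, m n θ ∂μ) + M * ∫ θ in Vᶜ, m n θ ∂μ := by
          gcongr
          · rw [← integral_const_mul]
            refine setIntegral_mono_on hIntam.integrableOn
              (hIntV.const_mul _) hVmeas fun θ hθ => ?_
            have : |f θ - f θstar| < ε / 2 := hθ
            exact mul_le_mul_of_nonneg_right this.le (hmn0 θ)
          · rw [← integral_const_mul]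
            refine setIntegral_mono_on hIntam.integrableOn
              (hIntVc.const_mul _) hVmeas.compl fun θ _ => ?_
            exact mul_le_mul_of_nonneg_right (hMb θ) (hmn0 θ)
  -- conclude
  set A := ∫ θ in V, m n θ ∂μ
  set B := ∫ θ in Vᶜ, m n θ ∂μ
  have hrn := hN₀ n hn
  rw [Real.dist_eq, sub_zero, abs_of_nonneg (div_nonneg hB hA.le)] at hrn
  have hBA : B < A * (ε / (2 * (M + 1))) := by
    have := (div_lt_iff₀ hA).mp hrn
    linarith
  rw [Real.dist_eq]
  have hratio : (∫ θ, f θ * m n θ ∂μ) / (∫ θ, m n θ ∂μ) - f θstar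
      = (∫ θ, f θ * m n θ ∂μ - f θstar * ∫ θ, m n θ ∂μ) / ∫ θ, m n θ ∂μ := by
    field_simp
  rw [hratio, abs_div, abs_of_pos hI, div_lt_iff₀ hI]
  calc |∫ θ, f θ * m n θ ∂μ - f θstar * ∫ θ, m n θ ∂μ|
      ≤ (ε / 2) * A + M * B := hnum
    _ < ε * ∫ θ, m n θ ∂μ := by
        rw [hsplit]
        have hM1 : (0:ℝ) < 2 * (M + 1) := by linarith
        have hkey : B * (2 * (M + 1)) < ε * A := (div_lt_div_iff₀ hA hM1).mp hrn
        nlinarith [mul_nonneg hε.le hB, mul_nonneg hM0 hB]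
end

section
/- Let Ξ be a compact metric space, μ a probability measure, m_N : Ξ → (0,∞), and suppose h_N(θ) = N^{−1} log m_N(θ) converges uniformly on Ξ to a continuous function h having a unique global maximizer θ* with θ* ∈ supp(μ) and h(θ*) > 0. Then for every open neighborhood V of θ*, (∫_{V^c} m_N dμ)/(∫_V m_N dμ) → 0 as N → ∞, and hence (∫ f m_N dμ)/(∫ m_N dμ) → f(θ*) for every continuous f. -/
open MeasureTheory Filter Topology

section Aux
variable {Ξ : Type*} [MetricSpace Ξ] [CompactSpace Ξ] [MeasurableSpace Ξ] [BorelSpace Ξ]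
  (μ : Measure Ξ) [IsProbabilityMeasure μ]

lemma aux_integrable {g : Ξ → ℝ} (hg : Continuous g) : Integrable g μ :=
  hg.integrable_of_hasCompactSupport
    (isCompact_univ.of_isClosed_subset (isClosed_tsupport g) (Set.subset_univ _))

lemma aux_lb {g : Ξ → ℝ} (hg : Continuous g) {s : Set Ξ} (hs : MeasurableSet s)
    {c : ℝ} (hc : ∀ x ∈ s, c ≤ g x) :
    c * (μ s).toReal ≤ ∫ x in s, g x ∂μ :=
  setIntegral_ge_of_const_le_real hs (measure_ne_top μ s) hc (aux_integrable μ hg).integrableOn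

lemma aux_ub {g : Ξ → ℝ} (hg : Continuous g) {s : Set Ξ}
    {C : ℝ} (hC0 : 0 ≤ C) (hC : ∀ x ∈ s, g x ≤ C) (hgn : ∀ x ∈ s, 0 ≤ g x) :
    ∫ x in s, g x ∂μ ≤ C := by
  have h1 : ‖∫ x in s, g x ∂μ‖ ≤ C * (μ s).toReal := by
    refine norm_setIntegral_le_of_norm_le_const (measure_lt_top μ s) (fun x hx => ?_)
    rw [Real.norm_eq_abs, abs_of_nonneg (hgn x hx)]; exact hC x hx
  have h2 : (μ s).toReal ≤ 1 := by
    have := ENNReal.toReal_mono (by simp) (prob_le_one (μ := μ) (s := s))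
    simpa using this
  calc ∫ x in s, g x ∂μ ≤ ‖∫ x in s, g x ∂μ‖ := le_abs_self _
    _ ≤ C * (μ s).toReal := h1
    _ ≤ C * 1 := by exact mul_le_mul_of_nonneg_left h2 hC0
    _ = C := mul_one C

lemma aux_part1
    (m : ℕ → Ξ → ℝ) (hpos : ∀ N θ, 0 < m N θ) (hcontm : ∀ N, Continuous (m N))
    (h : Ξ → ℝ) (hconth : Continuous h)
    (hunif : TendstoUniformly (fun (N : ℕ) θ => (N : ℝ)⁻¹ * Real.log (m N θ)) h atTop)
    (θstar : Ξ)
    (hsupp : ∀ V : Set Ξ, IsOpen V → θstar ∈ V → 0 < μ V)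
    (hmax : ∀ θ, θ ≠ θstar → h θ < h θstar)
    {V : Set Ξ} (hV : IsOpen V) (hVθ : θstar ∈ V) :
    Tendsto (fun N => (∫ θ in Vᶜ, m N θ ∂μ) / (∫ θ in V, m N θ ∂μ)) atTop (𝓝 0) := by
  by_cases hVc : Vᶜ = ∅
  · simpa [hVc] using tendsto_const_nhds
  -- max of h on Vᶜ
  obtain ⟨θ₀, hθ₀mem, hθ₀max⟩ := (hV.isClosed_compl.isCompact).exists_isMaxOn
    (Set.nonempty_iff_ne_empty.2 hVc) hconth.continuousOn
  set M := h θ₀ with hMdef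
  have hθ₀ne : θ₀ ≠ θstar := fun he => hθ₀mem (he ▸ hVθ)
  have hM : M < h θstar := hmax θ₀ hθ₀ne
  set ε : ℝ := (h θstar - M) / 4 with hεdef
  have hε : 0 < ε := by rw [hεdef]; linarith
  -- small neighborhood W of θstar inside V where h is large
  set W : Set Ξ := V ∩ h ⁻¹' Set.Ioi (h θstar - ε) with hWdef
  have hWopen : IsOpen W := hV.inter (isOpen_Ioi.preimage hconth)
  have hWθ : θstar ∈ W := ⟨hVθ, by simp [hε]⟩
  have hWμ : 0 < μ W := hsupp W hWopen hWθ
  set w : ℝ := (μ W).toReal with hwdef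
  have hw : 0 < w := ENNReal.toReal_pos hWμ.ne' (measure_ne_top μ W)
  apply squeeze_zero' (g := fun N : ℕ => Real.exp (-(N : ℝ) * ε) / w)
  · exact Eventually.of_forall fun N => div_nonneg
      (integral_nonneg fun θ => (hpos N θ).le) (integral_nonneg fun θ => (hpos N θ).le)
  · have hev : ∀ᶠ N : ℕ in atTop, ∀ θ, dist (h θ) ((N : ℝ)⁻¹ * Real.log (m N θ)) < ε :=
      Metric.tendstoUniformly_iff.1 hunif ε hε
    filter_upwards [hev, eventually_ge_atTop 1] with N hNd hN1
    have hNpos : (0 : ℝ) < (N : ℝ) := by exact_mod_cast hN1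
    -- representation m N θ = exp (N * h_N θ)
    have hrep : ∀ θ, m N θ = Real.exp ((N : ℝ) * ((N : ℝ)⁻¹ * Real.log (m N θ))) := by
      intro θ
      rw [← mul_assoc, mul_inv_cancel₀ hNpos.ne', one_mul, Real.exp_log (hpos N θ)]
    have hub : ∀ θ ∈ Vᶜ, m N θ ≤ Real.exp ((N : ℝ) * (M + ε)) := by
      intro θ hθ
      rw [hrep θ]
      apply Real.exp_le_exp.2
      apply mul_le_mul_of_nonneg_left _ hNpos.le
      have := hNd θ
      rw [Real.dist_eq, abs_lt] at this
      have := isMaxOn_iff.1 hθ₀max θ hθ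
      linarith
    have hlb : ∀ θ ∈ W, Real.exp ((N : ℝ) * (h θstar - 2 * ε)) ≤ m N θ := by
      intro θ hθ
      rw [hrep θ]
      apply Real.exp_le_exp.2
      apply mul_le_mul_of_nonneg_left _ hNpos.le
      have h1 := hNd θ
      rw [Real.dist_eq, abs_lt] at h1
      have h2 : h θstar - ε < h θ := hθ.2
      linarith
    have hA : (∫ θ in Vᶜ, m N θ ∂μ) ≤ Real.exp ((N : ℝ) * (M + ε)) :=
      aux_ub μ (hcontm N) (Real.exp_nonneg _) hub (fun x _ => (hpos N x).le)
    have hBW : Real.exp ((N : ℝ) * (h θstar - 2 * ε)) * w ≤ ∫ θ in W, m N θ ∂μ :=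
      aux_lb μ (hcontm N) hWopen.measurableSet hlb
    have hWV : (∫ θ in W, m N θ ∂μ) ≤ ∫ θ in V, m N θ ∂μ :=
      setIntegral_mono_set (aux_integrable μ (hcontm N)).integrableOn
        (Eventually.of_forall fun θ => (hpos N θ).le)
        (HasSubset.Subset.eventuallyLE (Set.inter_subset_left))
    have hBpos : 0 < Real.exp ((N : ℝ) * (h θstar - 2 * ε)) * w :=
      mul_pos (Real.exp_pos _) hw
    have hB : Real.exp ((N : ℝ) * (h θstar - 2 * ε)) * w ≤ ∫ θ in V, m N θ ∂μ :=
      hBW.trans hWV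
    calc (∫ θ in Vᶜ, m N θ ∂μ) / (∫ θ in V, m N θ ∂μ)
        ≤ Real.exp ((N : ℝ) * (M + ε)) / (Real.exp ((N : ℝ) * (h θstar - 2 * ε)) * w) :=
          div_le_div₀ (Real.exp_nonneg _) hA hBpos hB
      _ = Real.exp (-(N : ℝ) * ε) / w := by
          rw [div_mul_eq_div_div, ← Real.exp_sub]
          have hkey : M + 3 * ε - h θstar = -ε := by rw [hεdef]; ring
          have harg : (N : ℝ) * (M + ε) - (N : ℝ) * (h θstar - 2 * ε) = -(N : ℝ) * ε := by
            linear_combination (N : ℝ) * hkey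
          rw [harg]
  · have h1 : Tendsto (fun N : ℕ => -(N : ℝ) * ε) atTop atBot := by
      have := (tendsto_natCast_atTop_atTop (R := ℝ)).atTop_mul_const_of_neg (neg_neg_iff_pos.2 hε : -ε < 0)
      simpa [mul_comm] using this
    have h2 : Tendsto (fun N : ℕ => Real.exp (-(N : ℝ) * ε)) atTop (𝓝 0) :=
      Real.tendsto_exp_atBot.comp h1
    simpa using h2.div_const w

end Aux

/-- Unique emerging dominance: if `h_N = N⁻¹ log m_N` converges uniformly to a
continuous `h` with unique maximizer `θ* ∈ supp μ` and `h θ* > 0`, then the mass of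
`m_N dμ` concentrates around `θ*`, and the renormalized measures converge weakly
to `δ_{θ*}`. -/
theorem stmt14
    {Ξ : Type*} [MetricSpace Ξ] [CompactSpace Ξ] [MeasurableSpace Ξ] [BorelSpace Ξ]
    (μ : Measure Ξ) [IsProbabilityMeasure μ]
    (m : ℕ → Ξ → ℝ) (hpos : ∀ N θ, 0 < m N θ) (hcontm : ∀ N, Continuous (m N))
    (h : Ξ → ℝ) (hconth : Continuous h)
    (hunif : TendstoUniformly (fun (N : ℕ) θ => (N : ℝ)⁻¹ * Real.log (m N θ)) h atTop)
    (θstar : Ξ)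
    (hsupp : ∀ V : Set Ξ, IsOpen V → θstar ∈ V → 0 < μ V)
    (hmax : ∀ θ, θ ≠ θstar → h θ < h θstar)
    (hposmax : 0 < h θstar) :
    (∀ V : Set Ξ, IsOpen V → θstar ∈ V →
      Tendsto (fun N => (∫ θ in Vᶜ, m N θ ∂μ) / (∫ θ in V, m N θ ∂μ)) atTop (𝓝 0)) ∧
    (∀ f : Ξ → ℝ, Continuous f →
      Tendsto (fun N => (∫ θ, f θ * m N θ ∂μ) / (∫ θ, m N θ ∂μ)) atTop
        (𝓝 (f θstar))) := by
  refine ⟨fun V hV hVθ => aux_part1 μ m hpos hcontm h hconth hunif θstar hsupp hmax hV hVθ, ?_⟩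
  intro f hf
  rw [Metric.tendsto_nhds]
  intro ε hε
  set g : Ξ → ℝ := fun θ => f θ - f θstar with hgdef
  have hgcont : Continuous g := hf.sub continuous_const
  set V : Set Ξ := (fun θ => |g θ|) ⁻¹' Set.Iio (ε / 2) with hVdef
  have hVopen : IsOpen V := isOpen_Iio.preimage hgcont.abs
  have hVθ : θstar ∈ V := by
    simp only [hVdef, hgdef, Set.mem_preimage, Set.mem_Iio, sub_self, abs_zero]
    linarith
  obtain ⟨θ₁, -, hθ₁⟩ := isCompact_univ.exists_isMaxOn ⟨θstar, Set.mem_univ _⟩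
    hgcont.abs.continuousOn
  set C : ℝ := |g θ₁| with hCdef
  have hC0 : 0 ≤ C := abs_nonneg _
  have hCb : ∀ θ, |g θ| ≤ C := fun θ => isMaxOn_iff.1 hθ₁ θ (Set.mem_univ _)
  have hratio := aux_part1 μ m hpos hcontm h hconth hunif θstar hsupp hmax hVopen hVθ
  have hsmall : ∀ᶠ N : ℕ in atTop,
      C * ((∫ θ in Vᶜ, m N θ ∂μ) / (∫ θ in V, m N θ ∂μ)) < ε / 2 := by
    have h0 : Tendsto (fun N : ℕ =>
        C * ((∫ θ in Vᶜ, m N θ ∂μ) / (∫ θ in V, m N θ ∂μ))) atTop (𝓝 (C * 0)) :=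
      hratio.const_mul C
    rw [mul_zero] at h0
    exact h0.eventually_lt_const (by linarith)
  filter_upwards [hsmall] with N hN
  -- positivity of the integrals
  obtain ⟨θ₂, -, hθ₂⟩ := isCompact_univ.exists_isMinOn ⟨θstar, Set.mem_univ _⟩
    (hcontm N).continuousOn
  have hmlb : ∀ θ, m N θ₂ ≤ m N θ := fun θ => isMinOn_iff.1 hθ₂ θ (Set.mem_univ _)
  have hVμ : 0 < (μ V).toReal :=
    ENNReal.toReal_pos (hsupp V hVopen hVθ).ne' (measure_ne_top μ V)
  set IV : ℝ := ∫ θ in V, m N θ ∂μ with hIVdef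
  set I : ℝ := ∫ θ, m N θ ∂μ with hIdef
  set A : ℝ := ∫ θ in Vᶜ, m N θ ∂μ with hAdef
  have hIVpos : 0 < IV :=
    lt_of_lt_of_le (mul_pos (hpos N θ₂) hVμ)
      (aux_lb μ (hcontm N) hVopen.measurableSet fun x _ => hmlb x)
  have hVI : IV ≤ I :=
    setIntegral_le_integral (aux_integrable μ (hcontm N))
      (Eventually.of_forall fun θ => (hpos N θ).le)
  have hIpos : 0 < I := lt_of_lt_of_le hIVpos hVI
  have hAnn : 0 ≤ A := integral_nonneg fun θ => (hpos N θ).le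
  have hgm : Continuous fun θ => g θ * m N θ := hgcont.mul (hcontm N)
  -- the key identity
  have hnum : (∫ θ, f θ * m N θ ∂μ) - f θstar * I = ∫ θ, g θ * m N θ ∂μ := by
    rw [hIdef, ← integral_const_mul, ← integral_sub (aux_integrable (g := fun θ => f θ * m N θ) μ (hf.mul (hcontm N)))
      (aux_integrable (g := fun θ => f θstar * m N θ) μ (continuous_const.mul (hcontm N)))]
    congr 1; ext θ; simp only [hgdef]; ring
  have key : (∫ θ, f θ * m N θ ∂μ) / I - f θstar = (∫ θ, g θ * m N θ ∂μ) / I := by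
    rw [← hnum, sub_div, mul_div_assoc, div_self hIpos.ne', mul_one]
  have hsplit : (∫ θ, g θ * m N θ ∂μ)
      = (∫ θ in V, g θ * m N θ ∂μ) + ∫ θ in Vᶜ, g θ * m N θ ∂μ :=
    (integral_add_compl hVopen.measurableSet (aux_integrable μ hgm)).symm
  -- bound on V
  have hb1 : |∫ θ in V, g θ * m N θ ∂μ| ≤ ε / 2 * IV := by
    have habs : |∫ θ in V, g θ * m N θ ∂μ| ≤ ∫ θ in V, |g θ * m N θ| ∂μ := by
      have := norm_integral_le_integral_norm (μ := μ.restrict V) (f := fun θ => g θ * m N θ)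
      simp only [Real.norm_eq_abs] at this
      exact this
    refine habs.trans ?_
    have hmono : (∫ θ in V, |g θ * m N θ| ∂μ) ≤ ∫ θ in V, ε / 2 * m N θ ∂μ := by
      refine setIntegral_mono_on (aux_integrable μ hgm.abs).integrableOn
        (aux_integrable μ (continuous_const.mul (hcontm N))).integrableOn
        hVopen.measurableSet (fun x hx => ?_)
      have hxV : |g x| < ε / 2 := hx
      rw [abs_mul, abs_of_pos (hpos N x)]
      exact mul_le_mul_of_nonneg_right hxV.le (hpos N x).le
    refine hmono.trans ?_
    rw [integral_const_mul]
  -- bound on Vᶜ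
  have hb2 : |∫ θ in Vᶜ, g θ * m N θ ∂μ| ≤ C * A := by
    have habs : |∫ θ in Vᶜ, g θ * m N θ ∂μ| ≤ ∫ θ in Vᶜ, |g θ * m N θ| ∂μ := by
      have := norm_integral_le_integral_norm (μ := μ.restrict Vᶜ) (f := fun θ => g θ * m N θ)
      simp only [Real.norm_eq_abs] at this
      exact this
    refine habs.trans ?_
    have hmono : (∫ θ in Vᶜ, |g θ * m N θ| ∂μ) ≤ ∫ θ in Vᶜ, C * m N θ ∂μ := by
      refine setIntegral_mono_on (aux_integrable μ hgm.abs).integrableOn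
        (aux_integrable μ (continuous_const.mul (hcontm N))).integrableOn
        hVopen.measurableSet.compl (fun x _ => ?_)
      rw [abs_mul, abs_of_pos (hpos N x)]
      exact mul_le_mul_of_nonneg_right (hCb x) (hpos N x).le
    refine hmono.trans ?_
    rw [integral_const_mul]
  -- final assembly
  rw [Real.dist_eq, key, abs_div, abs_of_pos hIpos]
  have hnumb : |∫ θ, g θ * m N θ ∂μ| ≤ ε / 2 * I + C * A := by
    rw [hsplit]
    refine (abs_add_le _ _).trans (add_le_add (hb1.trans ?_) hb2)
    exact mul_le_mul_of_nonneg_left hVI (by linarith)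
  calc |∫ θ, g θ * m N θ ∂μ| / I ≤ (ε / 2 * I + C * A) / I := by gcongr
    _ = ε / 2 + C * A / I := by
        rw [add_div, mul_div_assoc, div_self hIpos.ne', mul_one]
    _ ≤ ε / 2 + C * (A / IV) := by
        rw [mul_div_assoc]
        gcongr
    _ < ε / 2 + ε / 2 := by
        have : C * (A / IV) < ε / 2 := hN
        linarith
    _ = ε := add_halves ε
end

section
/- Let X be the Markov chain on ℤ started at 0 which from any state i ≥ 1 steps +1 with probability θ and −1 with probability 1−θ, from i ≤ −1 steps −1 with probability θ and +1 with probability 1−θ, and from 0 steps ±1 with equal total dynamics as above (single-well walk), with 1/2 < θ ≤ 1. Let τ_N be the first hitting time of {−N, N}. Then τ_N / E[τ_N] → 1 almost surely as N → ∞. -/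
open MeasureTheory ProbabilityTheory Filter Topology Finset
open scoped ENNReal NNReal

section Pathwise
variable {e : ℕ → ℤ} {s : ℕ → ℤ}

lemma aux15_nonneg (he : ∀ n, e n = 1 ∨ e n = -1) (hs0 : s 0 = 0)
    (hstep : ∀ n, s (n+1) = if s n = 0 then 1 else s n + e n) :
    ∀ n, 0 ≤ s n := by
  intro n; induction n with
  | zero => simp [hs0]
  | succ n ih =>
    rw [hstep n]; rcases he n with h1 | h1 <;> split <;> omega

lemma aux15_le (he : ∀ n, e n = 1 ∨ e n = -1) (hs0 : s 0 = 0)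
    (hstep : ∀ n, s (n+1) = if s n = 0 then 1 else s n + e n) :
    ∀ n, s n ≤ n := by
  intro n; induction n with
  | zero => simp [hs0]
  | succ n ih =>
    rw [hstep n]; push_cast; rcases he n with h1 | h1 <;> split <;> omega

lemma aux15_w_le (he : ∀ n, e n = 1 ∨ e n = -1) (hs0 : s 0 = 0)
    (hstep : ∀ n, s (n+1) = if s n = 0 then 1 else s n + e n) :
    ∀ n, ∑ k ∈ Finset.range n, e k ≤ s n := by
  intro n; induction n with
  | zero => simp [hs0]
  | succ n ih =>
    rw [hstep n, Finset.sum_range_succ]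
    have := aux15_nonneg he hs0 hstep n
    rcases he n with h1 | h1 <;> split <;> omega

lemma aux15_const_diff (hstep : ∀ n, s (n+1) = if s n = 0 then 1 else s n + e n)
    {m : ℕ} (hz : ∀ k, m ≤ k → s k ≠ 0) :
    ∀ n, m ≤ n → s n - s m = ∑ k ∈ Finset.range n, e k - ∑ k ∈ Finset.range m, e k := by
  intro n hn
  induction n, hn using Nat.le_induction with
  | base => simp
  | succ n hn ih =>
    rw [hstep n, Finset.sum_range_succ, if_neg (hz n hn)]
    omega

lemma aux15_prefixIVT (he : ∀ n, e n = 1 ∨ e n = -1) (hs0 : s 0 = 0)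
    (hstep : ∀ n, s (n+1) = if s n = 0 then 1 else s n + e n)
    {N : ℤ} (hN : 0 ≤ N) {k : ℕ} (hk : N ≤ s k) : ∃ j, j ≤ k ∧ s j = N := by
  classical
  have hex : ∃ j, N ≤ s j := ⟨k, hk⟩
  set j0 := Nat.find hex with hj0
  have hspec : N ≤ s j0 := Nat.find_spec hex
  have hj0k : j0 ≤ k := Nat.find_le hk
  refine ⟨j0, hj0k, ?_⟩
  rcases Nat.eq_zero_or_pos j0 with h0 | hpos
  · rw [h0] at hspec ⊢; omega
  · obtain ⟨m, hm⟩ := Nat.exists_eq_add_of_lt hpos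
    have hmin : ¬ N ≤ s m := Nat.find_min hex (by omega)
    have hsm := hstep m
    have : s (m + 1) = s j0 := by rw [hm]; ring_nf
    rcases he m with h1 | h1 <;> split at hsm <;> omega

lemma aux15_upto (he : ∀ n, e n = 1 ∨ e n = -1) (hs0 : s 0 = 0)
    (hstep : ∀ n, s (n+1) = if s n = 0 then 1 else s n + e n)
    (N : ℕ) {k : ℕ} (hk : k ≤ sInf {n | s n = (N : ℤ)}) : s k ≤ N := by
  by_contra hlt
  push_neg at hlt
  obtain ⟨j, hjk, hj⟩ := aux15_prefixIVT he hs0 hstep (N := (N:ℤ)) (by positivity) hlt.le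
  have h1 : sInf {n | s n = (N : ℤ)} ≤ j := Nat.sInf_le hj
  have : j = k := by omega
  subst this
  omega

lemma aux15_tendsto_s (he : ∀ n, e n = 1 ∨ e n = -1) (hs0 : s 0 = 0)
    (hstep : ∀ n, s (n+1) = if s n = 0 then 1 else s n + e n)
    {c : ℝ} (hc : 0 < c)
    (hw : Tendsto (fun n => ((∑ k ∈ Finset.range n, e k : ℤ) : ℝ) / n) atTop (𝓝 c)) :
    Tendsto (fun n => ((s n : ℤ) : ℝ) / n) atTop (𝓝 c) ∧
      Tendsto (fun n => ((s n : ℤ) : ℝ)) atTop atTop := by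
  have hwtop : Tendsto (fun n => ((∑ k ∈ Finset.range n, e k : ℤ) : ℝ)) atTop atTop := by
    have h1 : Tendsto (fun n : ℕ =>
        (((∑ k ∈ Finset.range n, e k : ℤ) : ℝ) / n) * n) atTop atTop :=
      hw.pos_mul_atTop hc tendsto_natCast_atTop_atTop
    refine h1.congr' ?_
    filter_upwards [eventually_ge_atTop 1] with n hn
    have hn0 : (n : ℝ) ≠ 0 := by positivity
    field_simp
  have hstop : Tendsto (fun n => ((s n : ℤ) : ℝ)) atTop atTop := by
    refine tendsto_atTop_mono (fun n => ?_) hwtop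
    exact_mod_cast aux15_w_le he hs0 hstep n
  refine ⟨?_, hstop⟩
  -- eventually s is nonzero
  have hev : ∀ᶠ n in atTop, (1 : ℝ) ≤ (s n : ℝ) := hstop.eventually_ge_atTop 1
  obtain ⟨m, hm⟩ := hev.exists_forall_of_atTop
  have hz : ∀ k, m ≤ k → s k ≠ 0 := by
    intro k hk h0
    have := hm k hk
    rw [h0] at this
    norm_num at this
  have key : ∀ n, m ≤ n → ((s n : ℤ) : ℝ) / n
      = ((∑ k ∈ Finset.range n, e k : ℤ) : ℝ) / n
        + ((s m : ℝ) - ((∑ k ∈ Finset.range m, e k : ℤ) : ℝ)) / n := by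
    intro n hn
    have := aux15_const_diff hstep hz n hn
    have hcast : ((s n : ℤ) : ℝ) = ((∑ k ∈ Finset.range n, e k : ℤ) : ℝ)
        + ((s m : ℝ) - ((∑ k ∈ Finset.range m, e k : ℤ) : ℝ)) := by
      have h2 : ((s n - s m : ℤ) : ℝ) = ((∑ k ∈ Finset.range n, e k : ℤ) : ℝ)
          - ((∑ k ∈ Finset.range m, e k : ℤ) : ℝ) := by exact_mod_cast congrArg Int.cast this
      push_cast at h2 ⊢
      linarith
    rw [hcast, add_div]
  have hlim2 : Tendsto (fun n : ℕ =>
      ((s m : ℝ) - ((∑ k ∈ Finset.range m, e k : ℤ) : ℝ)) / n) atTop (𝓝 0) :=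
    tendsto_const_div_atTop_nhds_zero_nat _
  have := hw.add hlim2
  rw [add_zero] at this
  refine this.congr' ?_
  filter_upwards [eventually_ge_atTop m] with n hn
  exact (key n hn).symm

lemma aux15_tendsto_tau (he : ∀ n, e n = 1 ∨ e n = -1) (hs0 : s 0 = 0)
    (hstep : ∀ n, s (n+1) = if s n = 0 then 1 else s n + e n)
    {c : ℝ} (hc : 0 < c)
    (hw : Tendsto (fun n => ((∑ k ∈ Finset.range n, e k : ℤ) : ℝ) / n) atTop (𝓝 c))
    (t : ℕ → ℕ) (ht : ∀ N, t N = sInf {n | s n = (N : ℤ)}) :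
    (∀ N : ℕ, s (t N) = N) ∧ (∀ N : ℕ, N ≤ t N) ∧
      Tendsto (fun N => ((t N : ℕ) : ℝ) / N) atTop (𝓝 c⁻¹) := by
  obtain ⟨hrat, hstop⟩ := aux15_tendsto_s he hs0 hstep hc hw
  have hhit : ∀ N : ℕ, {n | s n = (N : ℤ)}.Nonempty := by
    intro N
    obtain ⟨k, hk⟩ := (hstop.eventually_ge_atTop (N : ℝ)).exists
    have : (N : ℤ) ≤ s k := by exact_mod_cast hk
    obtain ⟨j, _, hj⟩ := aux15_prefixIVT he hs0 hstep (by positivity) this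
    exact ⟨j, hj⟩
  have hst : ∀ N : ℕ, s (t N) = N := by
    intro N; rw [ht N]; exact Nat.sInf_mem (hhit N)
  have htge : ∀ N : ℕ, N ≤ t N := by
    intro N
    have h1 : (N : ℤ) ≤ t N := by
      rw [← hst N]; exact aux15_le he hs0 hstep (t N)
    exact_mod_cast h1
  refine ⟨hst, htge, ?_⟩
  have httop : Tendsto t atTop atTop :=
    tendsto_atTop_mono htge tendsto_id
  have hcomp : Tendsto (fun N => ((s (t N) : ℤ) : ℝ) / (t N)) atTop (𝓝 c) :=
    hrat.comp httop
  have hcomp2 : Tendsto (fun N : ℕ => (N : ℝ) / (t N)) atTop (𝓝 c) := by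
    refine hcomp.congr (fun N => ?_)
    rw [hst N]; norm_num
  have := hcomp2.inv₀ hc.ne'
  refine this.congr (fun N => ?_)
  rw [inv_div]

end Pathwise


lemma aux15_measurable_sInf {Ω : Type*} [MeasurableSpace Ω] {Q : ℕ → Ω → Prop}
    (h : ∀ n, MeasurableSet {ω | Q n ω}) :
    Measurable (fun ω => sInf {n | Q n ω}) := by
  apply measurable_to_countable'
  intro k
  match k with
  | 0 =>
    have heq : (fun ω => sInf {n | Q n ω}) ⁻¹' {0}
        = {ω | Q 0 ω} ∪ ⋂ n, {ω | Q n ω}ᶜ := by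
      ext ω
      simp only [Set.mem_preimage, Set.mem_singleton_iff, Nat.sInf_eq_zero, Set.mem_union,
        Set.mem_iInter, Set.mem_compl_iff, Set.mem_setOf_eq]
      constructor
      · rintro (h0 | hemp)
        · exact Or.inl h0
        · exact Or.inr (fun n hn => by
            have : n ∈ {n | Q n ω} := hn
            rw [hemp] at this; exact this)
      · rintro (h0 | hall)
        · exact Or.inl h0
        · right
          ext n
          simp only [Set.mem_setOf_eq, Set.mem_empty_iff_false, iff_false]
          exact hall n
    rw [heq]
    exact (h 0).union (MeasurableSet.iInter (fun n => (h n).compl))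
  | (k+1) =>
    have heq : (fun ω => sInf {n | Q n ω}) ⁻¹' {k+1}
        = {ω | Q (k+1) ω} ∩ ⋂ j ∈ Set.Iio (k+1), {ω | Q j ω}ᶜ := by
      ext ω
      simp only [Set.mem_preimage, Set.mem_singleton_iff, Set.mem_inter_iff, Set.mem_iInter,
        Set.mem_compl_iff, Set.mem_setOf_eq, Set.mem_Iio]
      constructor
      · intro hs
        have hne : {n | Q n ω}.Nonempty := by
          by_contra hne
          rw [Set.not_nonempty_iff_eq_empty] at hne
          rw [hne, Nat.sInf_empty] at hs
          exact Nat.succ_ne_zero k hs.symm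
        constructor
        · have := Nat.sInf_mem hne
          rwa [hs] at this
        · intro j hj
          exact Nat.notMem_of_lt_sInf (by omega : j < sInf {n | Q n ω})
      · rintro ⟨hk, hlt⟩
        refine le_antisymm (Nat.sInf_le hk) ?_
        by_contra hc
        push_neg at hc
        have hmem := Nat.sInf_mem (⟨k+1, hk⟩ : {n | Q n ω}.Nonempty)
        exact hlt _ hc hmem
    rw [heq]
    exact (h (k+1)).inter
      (MeasurableSet.biInter (Set.to_countable _) (fun j _ => (h j).compl))

lemma aux15_indepFun_of_indep {Ω β γ : Type*} {m0 : MeasurableSpace Ω}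
    [MeasurableSpace β] [MeasurableSpace γ]
    {μ : Measure Ω} {m₁ m₂ : MeasurableSpace Ω} {f : Ω → β} {g : Ω → γ}
    (h : Indep m₁ m₂ μ) (hf : Measurable[m₁] f) (hg : Measurable[m₂] g) :
    IndepFun f g μ :=
  indep_of_indep_of_le_left (indep_of_indep_of_le_right h (measurable_iff_comap_le.1 hg))
    (measurable_iff_comap_le.1 hf)

lemma aux15_int_eps {Ω : Type*} [MeasureSpace Ω] [IsProbabilityMeasure (ℙ : Measure Ω)]
    {θ : ℝ} (hθ0 : 0 < θ) (hθ1 : θ ≤ 1) {V : Ω → ℝ} (hV : Measurable V)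
    (hunif : Measure.map V ℙ = volume.restrict (Set.Ioo (0:ℝ) 1)) :
    ∫ ω, (if V ω < θ then (1:ℝ) else -1) = 2*θ - 1 := by
  have hf : Measurable (fun x : ℝ => if x < θ then (1:ℝ) else -1) :=
    Measurable.ite measurableSet_Iio measurable_const measurable_const
  have hmap := integral_map (μ := (ℙ : Measure Ω)) hV.aemeasurable
    (f := fun x : ℝ => if x < θ then (1:ℝ) else -1) hf.aestronglyMeasurable
  rw [hunif] at hmap
  rw [← hmap]
  have hsplit : Set.Ioo (0:ℝ) 1 = Set.Ioo 0 θ ∪ Set.Ico θ 1 := by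
    ext x
    simp only [Set.mem_Ioo, Set.mem_union, Set.mem_Ico]
    constructor
    · rintro ⟨h0, h1⟩
      rcases lt_or_ge x θ with h | h
      · exact Or.inl ⟨h0, h⟩
      · exact Or.inr ⟨h, h1⟩
    · rintro (⟨h0, h1⟩ | ⟨h0, h1⟩)
      · exact ⟨h0, lt_of_lt_of_le h1 hθ1⟩
      · exact ⟨lt_of_lt_of_le hθ0 h0, h1⟩
  have hdisj : Disjoint (Set.Ioo (0:ℝ) θ) (Set.Ico θ 1) := by
    apply Set.disjoint_left.2
    rintro x ⟨_, hx⟩ ⟨hx', _⟩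
    exact absurd hx' (not_le.2 hx)
  have hint1 : IntegrableOn (fun x : ℝ => if x < θ then (1:ℝ) else -1) (Set.Ioo 0 θ) := by
    refine (integrableOn_const (C := (1:ℝ)) measure_Ioo_lt_top.ne)
      |>.congr_fun (fun x hx => ?_) measurableSet_Ioo
    simp [hx.2]
  have hint2 : IntegrableOn (fun x : ℝ => if x < θ then (1:ℝ) else -1) (Set.Ico θ 1) := by
    refine (integrableOn_const (C := (-1:ℝ)) measure_Ico_lt_top.ne)
      |>.congr_fun (fun x hx => ?_) measurableSet_Ico
    simp [not_lt.2 hx.1]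
  rw [hsplit, setIntegral_union hdisj measurableSet_Ico hint1 hint2]
  have h1 : ∫ x in Set.Ioo (0:ℝ) θ, (if x < θ then (1:ℝ) else -1)
      = ∫ x in Set.Ioo (0:ℝ) θ, (1:ℝ) := by
    apply setIntegral_congr_fun measurableSet_Ioo
    intro x hx
    simp [hx.2]
  have h2 : ∫ x in Set.Ico θ (1:ℝ), (if x < θ then (1:ℝ) else -1)
      = ∫ x in Set.Ico θ (1:ℝ), (-1:ℝ) := by
    apply setIntegral_congr_fun measurableSet_Ico
    intro x hx
    simp [not_lt.2 hx.1]
  rw [h1, h2, setIntegral_const, setIntegral_const, measureReal_def, measureReal_def, Real.volume_Ioo, Real.volume_Ico,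
    ENNReal.toReal_ofReal (by linarith), ENNReal.toReal_ofReal (by linarith)]
  simp only [smul_eq_mul]
  ring


/-- Cut-off for the supercritical single-well walk (`1/2 < θ ≤ 1`), driven by
i.i.d. uniform innovations: `τ_N / E[τ_N] → 1` almost surely. -/
theorem stmt15
    {Ω : Type*} [MeasureSpace Ω] [IsProbabilityMeasure (ℙ : Measure Ω)]
    (θ : ℝ) (hθ : 1 / 2 < θ) (hθ1 : θ ≤ 1)
    (U : ℕ → Ω → ℝ) (hUmeas : ∀ n, Measurable (U n))
    (hUindep : iIndepFun U ℙ)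
    (hUunif : ∀ n, Measure.map (U n) ℙ = volume.restrict (Set.Ioo (0 : ℝ) 1))
    (X : ℕ → Ω → ℤ) (hX0 : ∀ ω, X 0 ω = 0)
    (hXstep : ∀ n ω, X (n + 1) ω = X n ω +
      (if 1 ≤ X n ω then (if U n ω < θ then 1 else -1)
        else (if U n ω < θ then -1 else 1)))
    (τ : ℕ → Ω → ℕ)
    (hτ : ∀ N ω, τ N ω = sInf {n | X n ω = (N : ℤ) ∨ X n ω = -(N : ℤ)}) :
    ∀ᵐ ω ∂(ℙ : Measure Ω),
      Tendsto (fun N : ℕ => (τ N ω : ℝ) / ∫ ω', (τ N ω' : ℝ)) atTop (𝓝 1) := by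
  classical
  set c : ℝ := 2 * θ - 1 with hc_def
  have hc : 0 < c := by rw [hc_def]; linarith
  set ε : ℕ → Ω → ℝ := fun n ω => if U n ω < θ then 1 else -1 with hε_def
  set εZ : ℕ → Ω → ℤ := fun n ω => if U n ω < θ then 1 else -1 with hεZ_def
  have hεZcast : ∀ n ω, ((εZ n ω : ℤ) : ℝ) = ε n ω := by
    intro n ω; by_cases h : U n ω < θ <;> simp [hε_def, hεZ_def, h]
  have hεZpm : ∀ n ω, εZ n ω = 1 ∨ εZ n ω = -1 := by
    intro n ω; by_cases h : U n ω < θ <;> simp [hεZ_def, h]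
  have hfmeas : Measurable (fun x : ℝ => if x < θ then (1:ℝ) else -1) :=
    Measurable.ite measurableSet_Iio measurable_const measurable_const
  have hεmeas : ∀ n, Measurable (ε n) := fun n => hfmeas.comp (hUmeas n)
  have hεint : ∀ n, Integrable (ε n) ℙ := by
    intro n
    refine ⟨(hεmeas n).aestronglyMeasurable, HasFiniteIntegral.of_bounded (C := 1) ?_⟩
    filter_upwards with ω
    by_cases h : U n ω < θ <;> simp [hε_def, h]
  have hεintval : ∀ n, ∫ ω, ε n ω = c := by
    intro n
    rw [hc_def]
    exact aux15_int_eps (by linarith) hθ1 (hUmeas n) (hUunif n)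
  -- strong law of large numbers
  have hpair : Pairwise (Function.onFun (IndepFun · · ℙ) ε) := by
    intro i j hij
    exact (hUindep.indepFun hij).comp hfmeas hfmeas
  have hident : ∀ i, IdentDistrib (ε i) (ε 0) ℙ ℙ := by
    intro i
    have hU : IdentDistrib (U i) (U 0) ℙ ℙ :=
      ⟨(hUmeas i).aemeasurable, (hUmeas 0).aemeasurable, by rw [hUunif i, hUunif 0]⟩
    exact hU.comp hfmeas
  have hslln := strong_law_ae (μ := (ℙ : Measure Ω)) ε (hεint 0) hpair hident
  rw [hεintval 0] at hslln
  -- pathwise structure of |X|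
  have habs0 : ∀ ω, |X 0 ω| = 0 := by intro ω; rw [hX0]; rfl
  have habsstep : ∀ ω n, |X (n+1) ω| = if |X n ω| = 0 then 1 else |X n ω| + εZ n ω := by
    intro ω n
    have hx := hXstep n ω
    by_cases hU : U n ω < θ <;> by_cases hX1 : 1 ≤ X n ω <;>
      simp only [hεZ_def, hU, hX1, if_true, if_false] at hx ⊢ <;>
      simp only [Int.abs_eq_natAbs] <;> split <;> omega
  have hτ' : ∀ N ω, τ N ω = sInf {n | |X n ω| = (N : ℤ)} := by
    intro N ω
    rw [hτ N ω]
    congr 1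
    ext n
    exact (abs_eq (Int.natCast_nonneg N)).symm
  -- the full-measure pathwise event
  have hA : ∀ᵐ ω ∂(ℙ : Measure Ω),
      Tendsto (fun N : ℕ => ((τ N ω : ℕ) : ℝ) / N) atTop (𝓝 c⁻¹) ∧
      (∀ N : ℕ, (N : ℕ) ≤ τ N ω) ∧
      (∀ N : ℕ, {n : ℕ | |X n ω| = (N : ℤ)}.Nonempty) := by
    filter_upwards [hslln] with ω hω
    have hw : Tendsto (fun n => ((∑ k ∈ Finset.range n, εZ k ω : ℤ) : ℝ) / n)
        atTop (𝓝 c) := by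
      refine hω.congr (fun n => ?_)
      rw [smul_eq_mul, inv_mul_eq_div]
      congr 1
      push_cast
      exact Finset.sum_congr rfl (fun k _ => (hεZcast k ω).symm)
    obtain ⟨hst, htge, htt⟩ := aux15_tendsto_tau (hεZpm · ω) (habs0 ω) (habsstep ω) hc hw
      (fun N => τ N ω) (fun N => hτ' N ω)
    exact ⟨htt, htge, fun N => ⟨τ N ω, hst N⟩⟩
  -- measurability of X and τ
  have hXmeas : ∀ n, Measurable (X n) := by
    intro n
    induction n with
    | zero =>
      have : X 0 = fun _ => (0 : ℤ) := funext hX0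
      rw [this]; exact measurable_const
    | succ n ih =>
      have hfun : X (n+1) = fun ω => X n ω +
          (if 1 ≤ X n ω then (if U n ω < θ then 1 else -1)
            else (if U n ω < θ then -1 else 1)) := funext (hXstep n)
      rw [hfun]
      have h1 : MeasurableSet {ω | 1 ≤ X n ω} := ih (show MeasurableSet {z : ℤ | 1 ≤ z} from trivial)
      have h2 : ∀ k, MeasurableSet {ω | U k ω < θ} := fun k =>
        measurableSet_lt (hUmeas k) measurable_const
      exact ih.add ((Measurable.ite h1
        (Measurable.ite (h2 n) measurable_const measurable_const)
        (Measurable.ite (h2 n) measurable_const measurable_const)))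
  have hτmeas : ∀ N, Measurable (τ N) := by
    intro N
    have : τ N = fun ω => sInf {n | X n ω = (N : ℤ) ∨ X n ω = -(N : ℤ)} := funext (hτ N)
    rw [this]
    apply aux15_measurable_sInf
    intro n
    exact (hXmeas n) (show MeasurableSet {z : ℤ | z = (N:ℤ) ∨ z = -(N:ℤ)} from trivial)
  -- real-valued τ is measurable
  have hτR_meas : ∀ N, Measurable (fun ω => (τ N ω : ℝ)) := fun N =>
    measurable_from_top.comp (hτmeas N)
  -- stopped |X| is measurable
  have hstop_meas : ∀ N n, Measurable (fun ω => |X (min (τ N ω) n) ω|) := by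
    intro N n
    apply measurable_to_countable'
    intro z
    have hset : (fun ω => |X (min (τ N ω) n) ω|) ⁻¹' {z}
        = ⋃ k ∈ Set.Iic n, ({ω | min (τ N ω) n = k} ∩ {ω | |X k ω| = z}) := by
      ext ω
      simp only [Set.mem_preimage, Set.mem_singleton_iff, Set.mem_iUnion, Set.mem_inter_iff,
        Set.mem_setOf_eq, Set.mem_Iic]
      constructor
      · intro h
        exact ⟨min (τ N ω) n, min_le_right _ _, rfl, h⟩
      · rintro ⟨k, _, hk, hz⟩
        rw [hk]; exact hz
    rw [hset]
    refine MeasurableSet.biUnion (Set.to_countable _) (fun k _ => ?_)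
    refine MeasurableSet.inter ?_ ?_
    · exact ((hτmeas N).min measurable_const)
        (show MeasurableSet {m : ℕ | m = k} from trivial)
    · have habst : Measurable (fun z : ℤ => |z|) := measurable_from_top
      have habsm : Measurable (fun ω => |X k ω|) := habst.comp (hXmeas k)
      exact habsm (show MeasurableSet {w : ℤ | w = z} from trivial)
  -- the key integrability and expectation bound
  have hkey : ∀ N : ℕ, Integrable (fun ω => (τ N ω : ℝ)) ℙ ∧
      (∫ ω', (τ N ω' : ℝ)) ≤ N / c := by
    intro N
    -- filtration
    set F : ℕ → MeasurableSpace Ω :=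
      fun n => ⨆ i ∈ {i : ℕ | i < n}, MeasurableSpace.comap (U i) inferInstance with hF_def
    have hcomap_le : ∀ i : ℕ, MeasurableSpace.comap (U i) inferInstance
        ≤ (inferInstance : MeasurableSpace Ω) := fun i => measurable_iff_comap_le.1 (hUmeas i)
    have hUmem : ∀ n i, i < n → Measurable[F n] (U i) := fun n i hi =>
      measurable_iff_comap_le.2 (le_iSup₂
        (f := fun i (_ : i ∈ {i : ℕ | i < n}) => MeasurableSpace.comap (U i) inferInstance) i hi)
    have hXF : ∀ n k, k ≤ n → Measurable[F n] (X k) := by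
      intro n k
      induction k with
      | zero =>
        intro _
        rw [show X 0 = fun _ => (0:ℤ) from funext hX0]
        exact measurable_const
      | succ k ih =>
        intro hk
        have hXk := ih (by omega)
        have hU : Measurable[F n] (U k) := hUmem n k (by omega)
        rw [show X (k+1) = fun ω => X k ω +
            (if 1 ≤ X k ω then (if U k ω < θ then 1 else -1)
              else (if U k ω < θ then -1 else 1)) from funext (hXstep k)]
        have h1 : MeasurableSet[F n] {ω | 1 ≤ X k ω} :=
          hXk (show MeasurableSet {z : ℤ | 1 ≤ z} from trivial)
        have h2 : MeasurableSet[F n] {ω | U k ω < θ} := measurableSet_lt hU measurable_const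
        exact hXk.add (Measurable.ite h1
          (Measurable.ite h2 measurable_const measurable_const)
          (Measurable.ite h2 measurable_const measurable_const))
    -- the prefix event
    set Bs : ℕ → Set Ω := fun n => {ω | ∀ k ≤ n, |X k ω| ≠ (N:ℤ)} with hBs_def
    have hBsF : ∀ n, MeasurableSet[F n] (Bs n) := by
      intro n
      have hset : Bs n = ⋂ k ∈ Set.Iic n, {ω | |X k ω| ≠ (N:ℤ)} := by
        ext ω; simp [hBs_def]
      rw [hset]
      refine MeasurableSet.biInter (Set.to_countable _) (fun k hk => ?_)
      have habst : Measurable (fun z : ℤ => |z|) := measurable_from_top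
      have hm : Measurable[F n] (fun ω => |X k ω|) := habst.comp (hXF n k hk)
      exact (hm (show MeasurableSet {z : ℤ | z = (N:ℤ)} from trivial)).compl
    have hFle : ∀ n, F n ≤ (inferInstance : MeasurableSpace Ω) := fun n =>
      iSup₂_le (fun i _ => hcomap_le i)
    have hBsmeas : ∀ n, MeasurableSet (Bs n) := fun n => hFle n _ (hBsF n)
    -- independence
    have hIndepBs : ∀ n, IndepFun (fun ω => Set.indicator (Bs n) (fun _ => (1:ℝ)) ω) (ε n) ℙ := by
      intro n
      have hind : Indep (F n) (MeasurableSpace.comap (U n) inferInstance) ℙ := by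
        have h := indep_biSup_compl hcomap_le hUindep {i : ℕ | i < n}
        exact indep_of_indep_of_le_right h
          (le_iSup₂ (f := fun i (_ : i ∈ {i : ℕ | i < n}ᶜ) =>
            MeasurableSpace.comap (U i) inferInstance) n (by simp))
      refine aux15_indepFun_of_indep hind ?_ ?_
      · exact (measurable_const.indicator (hBsF n))
      · exact hfmeas.comp (measurable_iff_comap_le.2 le_rfl)
    have hPB : ∀ n, ∫ ω, (ε n ω) * (Set.indicator (Bs n) (fun _ => (1:ℝ)) ω)
        = c * ∫ ω, Set.indicator (Bs n) (fun _ => (1:ℝ)) ω := by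
      intro n
      have h := (hIndepBs n).symm.integral_mul_eq_mul_integral ((hεmeas n).aestronglyMeasurable)
        ((measurable_const.indicator (hBsmeas n)).aestronglyMeasurable)
      have hfun : (ε n * fun ω => Set.indicator (Bs n) (fun _ => (1:ℝ)) ω)
          = fun ω => ε n ω * Set.indicator (Bs n) (fun _ => (1:ℝ)) ω := rfl
      rw [hfun] at h
      rw [h, hεintval n]
    -- stopped processes
    set mt : ℕ → Ω → ℝ := fun n ω => ((min (τ N ω) n : ℕ) : ℝ) with hmt_def
    set g : ℕ → Ω → ℝ := fun n ω => ((|X (min (τ N ω) n) ω| : ℤ) : ℝ) with hg_def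
    set Ind : ℕ → Ω → ℝ := fun n ω => if n < τ N ω then 1 else 0 with hInd_def
    -- pathwise identities
    have p1 : ∀ n ω, mt (n+1) ω = mt n ω + Ind n ω := by
      intro n ω
      simp only [hmt_def, hInd_def]
      by_cases h : n < τ N ω
      · rw [if_pos h, min_eq_right (by omega : n + 1 ≤ τ N ω),
          min_eq_right (by omega : n ≤ τ N ω)]
        push_cast; ring
      · rw [if_neg h, min_eq_left (by omega : τ N ω ≤ n + 1),
          min_eq_left (by omega : τ N ω ≤ n)]
        ring
    have p2 : ∀ n ω, g n ω + ε n ω * Ind n ω ≤ g (n+1) ω := by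
      intro n ω
      simp only [hg_def, hInd_def]
      by_cases h : n < τ N ω
      · rw [if_pos h, min_eq_right (by omega : n + 1 ≤ τ N ω),
          min_eq_right (by omega : n ≤ τ N ω), mul_one, ← hεZcast]
        have hZ : |X n ω| + εZ n ω ≤ |X (n+1) ω| := by
          rw [habsstep ω n]
          simp only [Int.abs_eq_natAbs]
          rcases hεZpm n ω with hpm | hpm <;> rw [hpm] <;> split <;> omega
        exact_mod_cast hZ
      · rw [if_neg h, min_eq_left (by omega : τ N ω ≤ n + 1),
          min_eq_left (by omega : τ N ω ≤ n), mul_zero, add_zero]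
    have p3 : ∀ n ω, 0 ≤ g n ω ∧ g n ω ≤ N := by
      intro n ω
      constructor
      · simp only [hg_def]
        exact_mod_cast abs_nonneg _
      · simp only [hg_def]
        have hle : min (τ N ω) n ≤ sInf {m : ℕ | |X m ω| = (N:ℤ)} := by
          rw [← hτ' N ω]; exact min_le_left _ _
        have := aux15_upto (hεZpm · ω) (habs0 ω) (habsstep ω) N hle
        exact_mod_cast this
    -- integrability
    have hmt_meas : ∀ n, Measurable (mt n) := fun n =>
      measurable_from_top.comp ((hτmeas N).min measurable_const)
    have hmt_int : ∀ n, Integrable (mt n) ℙ := by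
      intro n
      refine ⟨(hmt_meas n).aestronglyMeasurable, HasFiniteIntegral.of_bounded (C := n) ?_⟩
      filter_upwards with ω
      simp only [hmt_def, Real.norm_eq_abs]
      rw [abs_of_nonneg (by positivity)]
      exact_mod_cast min_le_right _ _
    have hg_meas : ∀ n, Measurable (g n) := fun n =>
      measurable_from_top.comp (hstop_meas N n)
    have hg_int : ∀ n, Integrable (g n) ℙ := by
      intro n
      refine ⟨(hg_meas n).aestronglyMeasurable, HasFiniteIntegral.of_bounded (C := N) ?_⟩
      filter_upwards with ω
      rw [Real.norm_eq_abs, abs_of_nonneg (p3 n ω).1]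
      exact (p3 n ω).2
    have hInd_meas : ∀ n, Measurable (Ind n) := by
      intro n
      apply Measurable.ite ((hτmeas N) (show MeasurableSet {m : ℕ | n < m} from trivial))
        measurable_const measurable_const
    have hInd_int : ∀ n, Integrable (Ind n) ℙ := by
      intro n
      refine ⟨(hInd_meas n).aestronglyMeasurable, HasFiniteIntegral.of_bounded (C := 1) ?_⟩
      filter_upwards with ω
      simp only [hInd_def]
      split <;> simp
    have hprod_int : ∀ n, Integrable (fun ω => ε n ω * Ind n ω) ℙ := by
      intro n
      refine ⟨((hεmeas n).mul (hInd_meas n)).aestronglyMeasurable,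
        HasFiniteIntegral.of_bounded (C := 1) ?_⟩
      filter_upwards with ω
      rw [Real.norm_eq_abs, abs_mul]
      have h1 : |ε n ω| ≤ 1 := by
        by_cases h : U n ω < θ <;> simp [hε_def, h]
      have h2 : |Ind n ω| ≤ 1 := by
        simp only [hInd_def]; split <;> simp
      calc |ε n ω| * |Ind n ω| ≤ 1 * 1 := by
            apply mul_le_mul h1 h2 (abs_nonneg _) zero_le_one
        _ = 1 := by ring
    -- a.e. identification of Ind with indicator of Bs
    have hIndeq : ∀ n, ∀ᵐ ω ∂(ℙ : Measure Ω),
        Ind n ω = Set.indicator (Bs n) (fun _ => (1:ℝ)) ω := by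
      intro n
      filter_upwards [hA] with ω hω
      have hne := hω.2.2 N
      have hiff : n < τ N ω ↔ ω ∈ Bs n := by
        rw [hτ' N ω]
        constructor
        · intro h k hk
          exact Nat.notMem_of_lt_sInf (lt_of_le_of_lt hk h)
        · intro h
          by_contra hle
          push_neg at hle
          exact h _ hle (Nat.sInf_mem hne)
      simp only [hInd_def, Set.indicator_apply]
      by_cases h : n < τ N ω
      · rw [if_pos h, if_pos (hiff.1 h)]
      · rw [if_neg h, if_neg (fun hB => h (hiff.2 hB))]
    -- the optional-stopping induction
    have hmain : ∀ n, c * ∫ ω, mt n ω ≤ ∫ ω, g n ω := by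
      intro n
      induction n with
      | zero =>
        have h1 : (fun ω => mt 0 ω) = fun _ => (0:ℝ) := by
          funext ω
          simp only [hmt_def, min_eq_right (Nat.zero_le _), Nat.cast_zero]
        have h2 : (fun ω => g 0 ω) = fun _ => (0:ℝ) := by
          funext ω
          simp only [hg_def, min_eq_right (Nat.zero_le _), habs0 ω, Int.cast_zero]
        rw [h1, h2]
        simp
      | succ n ih =>
        have e1 : ∫ ω, mt (n+1) ω = (∫ ω, mt n ω) + ∫ ω, Ind n ω := by
          rw [← integral_add (hmt_int n) (hInd_int n)]
          exact integral_congr_ae (Filter.Eventually.of_forall (fun ω => p1 n ω))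
        have e2 : (∫ ω, g n ω) + (∫ ω, ε n ω * Ind n ω) ≤ ∫ ω, g (n+1) ω := by
          rw [← integral_add (hg_int n) (hprod_int n)]
          exact integral_mono ((hg_int n).add (hprod_int n)) (hg_int (n+1)) (fun ω => p2 n ω)
        have e3 : ∫ ω, ε n ω * Ind n ω = c * ∫ ω, Ind n ω := by
          have h1 : ∫ ω, ε n ω * Ind n ω
              = ∫ ω, ε n ω * Set.indicator (Bs n) (fun _ => (1:ℝ)) ω := by
            apply integral_congr_ae
            filter_upwards [hIndeq n] with ω h
            rw [h]
          have h2 : ∫ ω, Ind n ω = ∫ ω, Set.indicator (Bs n) (fun _ => (1:ℝ)) ω :=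
            integral_congr_ae (hIndeq n)
          rw [h1, h2]
          exact hPB n
        have e4 : 0 ≤ ∫ ω, Ind n ω := by
          apply integral_nonneg
          intro ω
          simp only [hInd_def]
          split <;> norm_num
        have := hc
        calc c * ∫ ω, mt (n+1) ω = c * (∫ ω, mt n ω) + c * ∫ ω, Ind n ω := by
              rw [e1]; ring
          _ ≤ (∫ ω, g n ω) + c * ∫ ω, Ind n ω := by linarith
          _ = (∫ ω, g n ω) + ∫ ω, ε n ω * Ind n ω := by rw [e3]
          _ ≤ ∫ ω, g (n+1) ω := e2
    have hmtN : ∀ n, ∫ ω, mt n ω ≤ N / c := by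
      intro n
      have h1 : ∫ ω, g n ω ≤ (N:ℝ) := by
        have h := integral_mono (hg_int n) (integrable_const ((N:ℝ)))
          (fun ω => (p3 n ω).2)
        simpa using h
      rw [le_div_iff₀ hc]
      have := hmain n
      linarith
    -- monotone convergence
    have hmt_mono : ∀ ω, Monotone (fun n => ((min (τ N ω) n : ℕ) : ℝ≥0∞)) := by
      intro ω a b hab
      exact_mod_cast Nat.cast_le.2 (min_le_min le_rfl hab)
    have hlin : ∫⁻ ω, ((τ N ω : ℕ) : ℝ≥0∞) ∂ℙ ≤ ENNReal.ofReal ((N:ℝ) / c) := by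
      have hsup : ∀ ω, (⨆ n, ((min (τ N ω) n : ℕ) : ℝ≥0∞)) = ((τ N ω : ℕ) : ℝ≥0∞) := by
        intro ω
        refine le_antisymm (iSup_le fun n => ?_) (le_iSup_of_le (τ N ω) ?_)
        · exact_mod_cast Nat.cast_le.2 (min_le_left _ _)
        · rw [min_self]
      have hmeasn : ∀ n : ℕ, AEMeasurable (fun ω => ((min (τ N ω) n : ℕ) : ℝ≥0∞)) ℙ :=
        fun n => (measurable_from_top.comp ((hτmeas N).min measurable_const)).aemeasurable
      have hMCT := lintegral_iSup' hmeasn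
        (Filter.Eventually.of_forall (fun ω => hmt_mono ω))
      have heq : ∫⁻ ω, ((τ N ω : ℕ) : ℝ≥0∞) ∂ℙ
          = ⨆ n, ∫⁻ ω, ((min (τ N ω) n : ℕ) : ℝ≥0∞) ∂ℙ := by
        rw [← hMCT]
        exact lintegral_congr (fun ω => (hsup ω).symm)
      rw [heq]
      refine iSup_le (fun n => ?_)
      have hofr : ENNReal.ofReal (∫ ω, mt n ω) = ∫⁻ ω, ((min (τ N ω) n : ℕ) : ℝ≥0∞) ∂ℙ := by
        rw [ofReal_integral_eq_lintegral_ofReal (hmt_int n)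
          (Filter.Eventually.of_forall (fun ω => by simp only [hmt_def]; positivity))]
        apply lintegral_congr
        intro ω
        simp only [hmt_def, ENNReal.ofReal_natCast]
      rw [← hofr]
      exact ENNReal.ofReal_le_ofReal (hmtN n)
    have hτint : Integrable (fun ω => (τ N ω : ℝ)) ℙ := by
      refine ⟨(hτR_meas N).aestronglyMeasurable, ?_⟩
      rw [hasFiniteIntegral_iff_norm]
      have heq2 : ∫⁻ ω, ENNReal.ofReal ‖(τ N ω : ℝ)‖ ∂ℙ = ∫⁻ ω, ((τ N ω : ℕ) : ℝ≥0∞) ∂ℙ := by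
        apply lintegral_congr
        intro ω
        rw [Real.norm_eq_abs, abs_of_nonneg (by positivity), ENNReal.ofReal_natCast]
      rw [heq2]
      exact lt_of_le_of_lt hlin ENNReal.ofReal_lt_top
    refine ⟨hτint, ?_⟩
    have hof : ENNReal.ofReal (∫ ω', (τ N ω' : ℝ)) = ∫⁻ ω, ((τ N ω : ℕ) : ℝ≥0∞) ∂ℙ := by
      rw [ofReal_integral_eq_lintegral_ofReal hτint
        (Filter.Eventually.of_forall (fun ω => by positivity))]
      exact lintegral_congr (fun ω => ENNReal.ofReal_natCast _)
    have hle2 : ENNReal.ofReal (∫ ω', (τ N ω' : ℝ)) ≤ ENNReal.ofReal ((N:ℝ)/c) := by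
      rw [hof]; exact hlin
    exact (ENNReal.ofReal_le_ofReal_iff (by positivity)).1 hle2
  have hτint : ∀ N, Integrable (fun ω => (τ N ω : ℝ)) ℙ := fun N => (hkey N).1
  have hup : ∀ N : ℕ, (∫ ω', (τ N ω' : ℝ)) ≤ N / c := fun N => (hkey N).2
  set Eτ : ℕ → ℝ := fun N => ∫ ω', (τ N ω' : ℝ) with hEτ_def
  -- dominated convergence : the truncated ratios converge
  have hmin_int : ∀ N : ℕ, Integrable (fun ω => min ((τ N ω : ℝ) / N) c⁻¹) ℙ := by
    intro N
    refine ⟨(((hτR_meas N).div_const _).min measurable_const).aestronglyMeasurable,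
      HasFiniteIntegral.of_bounded (C := c⁻¹) ?_⟩
    filter_upwards with ω
    rw [Real.norm_eq_abs, abs_of_nonneg (le_min (by positivity) (by positivity))]
    exact min_le_right _ _
  have hFt : Tendsto (fun N : ℕ => ∫ ω, min ((τ N ω : ℝ) / N) c⁻¹) atTop (𝓝 c⁻¹) := by
    have hDCT := tendsto_integral_of_dominated_convergence (μ := (ℙ : Measure Ω))
      (F := fun N ω => min ((τ N ω : ℝ) / N) c⁻¹) (f := fun _ => c⁻¹) (bound := fun _ => c⁻¹)
      (fun N => (((hτR_meas N).div_const _).min measurable_const).aestronglyMeasurable)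
      (integrable_const _)
      (fun N => by
        filter_upwards with ω
        rw [Real.norm_eq_abs, abs_of_nonneg (le_min (by positivity) (by positivity))]
        exact min_le_right _ _)
      (by
        filter_upwards [hA] with ω hω
        have h := (hω.1).min (tendsto_const_nhds (x := c⁻¹))
        rwa [min_self] at h)
    simpa using hDCT
  have hEN : Tendsto (fun N : ℕ => Eτ N / N) atTop (𝓝 c⁻¹) := by
    have hcne : c ≠ 0 := hc.ne'
    refine tendsto_of_tendsto_of_tendsto_of_le_of_le' hFt tendsto_const_nhds ?_ ?_
    · filter_upwards [eventually_ge_atTop 1] with N hN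
      have h1 : (∫ ω, min ((τ N ω : ℝ) / N) c⁻¹) ≤ ∫ ω, (τ N ω : ℝ) / N :=
        integral_mono (hmin_int N) ((hτint N).div_const _) (fun ω => min_le_left _ _)
      rwa [integral_div] at h1
    · filter_upwards [eventually_ge_atTop 1] with N hN
      have hN0 : (0:ℝ) < N := by exact_mod_cast hN
      calc Eτ N / N ≤ ((N:ℝ) / c) / N := by
            gcongr
            exact hup N
        _ = c⁻¹ := by field_simp
  -- conclusion
  filter_upwards [hA] with ω hω
  have h1 : Tendsto (fun N : ℕ => (τ N ω : ℝ) / N) atTop (𝓝 c⁻¹) := hω.1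
  have hdiv := h1.div hEN (inv_ne_zero hc.ne')
  rw [div_self (inv_ne_zero hc.ne')] at hdiv
  refine hdiv.congr' ?_
  filter_upwards [eventually_ge_atTop 1] with N hN
  have hN0 : (N:ℝ) ≠ 0 := by
    have : (0:ℝ) < N := by exact_mod_cast hN
    exact this.ne'
  show (τ N ω : ℝ) / N / (Eτ N / N) = (τ N ω : ℝ) / Eτ N
  rcases eq_or_ne (Eτ N) 0 with h0 | h0
  · rw [h0]; simp
  · field_simp
end
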